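/- arXiv:1905.05304 — 8 statements merged into one kernel-verified Lean document; each statement's English description precedes it below -/
import Mathlib

section
/- Let 𝒢=(G,λ) be a temporal graph, and let Δ,k ∈ ℕ. Let 𝒢'=(G,λ') be the temporal graph obtained from 𝒢 by inserting one edgeless snapshot after every Δ consecutive snapshots, i.e., λ'(e) = { t + ⌈t/Δ⌉ − 1 : t ∈ λ(e) } for every edge e of G. Then 𝒢 has a Δ-temporal matching of size at least k if and only if 𝒢' has a (Δ+1)-temporal matching of size at least k. -/
variable {V : Type*}

/-- The underlying (static) graph of a temporal graph given by its time-labeling. -/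
def ugraph (lab : Sym2 V → Finset ℕ) : SimpleGraph V where
  Adj x y := x ≠ y ∧ (lab s(x, y)).Nonempty
  symm := by
    constructor
    intro x y h
    exact ⟨h.1.symm, by rw [Sym2.eq_swap]; exact h.2⟩
  loopless := by constructor; intro x h; exact h.1 rfl

/-- `(e, t)` is a time edge of the temporal graph given by `lab`. -/
def IsTimeEdge (lab : Sym2 V → Finset ℕ) (p : Sym2 V × ℕ) : Prop :=
  ¬ p.1.IsDiag ∧ p.2 ∈ lab p.1

/-- Two time edges are Δ-independent: edges disjoint or labels at least Δ apart. -/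
def DIndep (Δ : ℕ) (p q : Sym2 V × ℕ) : Prop :=
  (∀ v, v ∈ p.1 → v ∉ q.1) ∨ Δ ≤ ((p.2 : ℤ) - (q.2 : ℤ)).natAbs

/-- A Δ-temporal matching. -/
def IsTM (lab : Sym2 V → Finset ℕ) (Δ : ℕ) (M : Finset (Sym2 V × ℕ)) : Prop :=
  (∀ p ∈ M, IsTimeEdge lab p) ∧ ∀ p ∈ M, ∀ q ∈ M, p ≠ q → DIndep Δ p q

/-- μ_Δ: maximum cardinality of a Δ-temporal matching. -/
noncomputable def tmu (lab : Sym2 V → Finset ℕ) (Δ : ℕ) : ℕ :=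
  sSup {k | ∃ M : Finset (Sym2 V × ℕ), IsTM lab Δ M ∧ M.card = k}

/-- The temporal graph has lifetime `T`. -/
def HasLifetime (lab : Sym2 V → Finset ℕ) (T : ℕ) : Prop :=
  (∀ e, ∀ t ∈ lab e, 1 ≤ t ∧ t ≤ T) ∧ ∃ e : Sym2 V, ¬ e.IsDiag ∧ T ∈ lab e

/-- The snapshot at time `t`. -/
def tsnapshot (lab : Sym2 V → Finset ℕ) (t : ℕ) : SimpleGraph V where
  Adj x y := x ≠ y ∧ t ∈ lab s(x, y)
  symm := by
    constructor
    intro x y h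
    exact ⟨h.1.symm, by rw [Sym2.eq_swap]; exact h.2⟩
  loopless := by constructor; intro x h; exact h.1 rfl

/-- 𝒢|_S : keep only time edges with label in `S`. -/
def trestrict (lab : Sym2 V → Finset ℕ) (S : Finset ℕ) : Sym2 V → Finset ℕ :=
  fun e => lab e ∩ S

/-- A finite matching of a static graph. -/
def IsMatchingF (G : SimpleGraph V) (R : Finset (Sym2 V)) : Prop :=
  (∀ e ∈ R, e ∈ G.edgeSet) ∧ ∀ e ∈ R, ∀ e' ∈ R, e ≠ e' → ∀ v, v ∈ e → v ∉ e'

/-- ν(G): maximum cardinality of a matching. -/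
noncomputable def matchNum (G : SimpleGraph V) : ℕ :=
  sSup {k | ∃ R : Finset (Sym2 V), IsMatchingF G R ∧ R.card = k}

/-- An independent set of a static graph. -/
def IsIndepF (G : SimpleGraph V) (S : Finset V) : Prop :=
  ∀ u ∈ S, ∀ v ∈ S, ¬ G.Adj u v

/-- α(G): maximum cardinality of an independent set. -/
noncomputable def indepNum (G : SimpleGraph V) : ℕ :=
  sSup {k | ∃ S : Finset V, IsIndepF G S ∧ S.card = k}

/-- The Δ-temporal line graph: vertices are the time edges, two distinct time edges are
adjacent iff the edges share a vertex and the labels are less than Δ apart. -/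
def tline (lab : Sym2 V → Finset ℕ) (Δ : ℕ) :
    SimpleGraph {p : Sym2 V × ℕ // IsTimeEdge lab p} where
  Adj p q := p ≠ q ∧ (∃ v, v ∈ p.1.1 ∧ v ∈ q.1.1) ∧ ((p.1.2 : ℤ) - (q.1.2 : ℤ)).natAbs < Δ
  symm := by
    constructor
    rintro p q ⟨hne, ⟨v, hv1, hv2⟩, hlt⟩
    exact ⟨hne.symm, ⟨v, hv2, hv1⟩, by omega⟩
  loopless := by constructor; rintro p ⟨hne, -⟩; exact hne rfl

/-! With `t - 1 = Δ q + r`, `0 ≤ r < Δ`, the new label is `(Δ + 1) q + r + 1`: labels within one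
block of `Δ` keep their distance and each later block moves one step further away. Hence two
positive labels are at least `Δ` apart iff their images are at least `Δ + 1` apart, so time edge
by time edge the relabeling maps Δ-temporal matchings bijectively onto (Δ+1)-temporal ones. -/

section Relabel

variable {V : Type*} {lab : Sym2 V → Finset ℕ} {f : ℕ → ℕ} {S : Set ℕ}
  {Δ Δ' : ℕ}

def relabel (f : ℕ → ℕ) (lab : Sym2 V → Finset ℕ) : Sym2 V → Finset ℕ :=
  fun e => (lab e).image f

theorem injOn_prodMap_id (hf : S.InjOn f) :
    {p : Sym2 V × ℕ | p.2 ∈ S}.InjOn (Prod.map id f) := fun _ hp _ hq h =>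
  Prod.ext (congrArg Prod.fst h :) (hf hp hq (congrArg Prod.snd h))

theorem isTimeEdge_relabel_map_iff (hS : ∀ e, ∀ t ∈ lab e, t ∈ S) (hf : S.InjOn f)
    {p : Sym2 V × ℕ} (hp : p.2 ∈ S) :
    IsTimeEdge (relabel f lab) (Prod.map id f p) ↔ IsTimeEdge lab p := by
  refine and_congr_right fun _ => ⟨fun h => ?_, Finset.mem_image_of_mem f⟩
  obtain ⟨t, ht, hft⟩ := Finset.mem_image.1 h
  rwa [← hf (hS _ _ ht) hp hft]

theorem dIndep_map_iff
    (hsep : ∀ a ∈ S, ∀ b ∈ S, Δ ≤ ((a : ℤ) - b).natAbs ↔ Δ' ≤ ((f a : ℤ) - f b).natAbs)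
    {p q : Sym2 V × ℕ} (hp : p.2 ∈ S) (hq : q.2 ∈ S) :
    DIndep Δ' (Prod.map id f p) (Prod.map id f q) ↔ DIndep Δ p q :=
  or_congr_right (hsep _ hp _ hq).symm

variable [DecidableEq V]

theorem isTM_image_map_iff (hS : ∀ e, ∀ t ∈ lab e, t ∈ S) (hf : S.InjOn f)
    (hsep : ∀ a ∈ S, ∀ b ∈ S, Δ ≤ ((a : ℤ) - b).natAbs ↔ Δ' ≤ ((f a : ℤ) - f b).natAbs)
    {M : Finset (Sym2 V × ℕ)} (hM : ∀ p ∈ M, p.2 ∈ S) :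
    IsTM (relabel f lab) Δ' (M.image (Prod.map id f)) ↔ IsTM lab Δ M := by
  simp only [IsTM, Finset.forall_mem_image]
  refine and_congr (forall₂_congr fun p hp => isTimeEdge_relabel_map_iff hS hf (hM p hp))
    (forall₂_congr fun p hp => forall₂_congr fun q hq => ?_)
  exact imp_congr ((injOn_prodMap_id hf).ne_iff (hM p hp) (hM q hq))
    (dIndep_map_iff hsep (hM p hp) (hM q hq))

theorem exists_isTM_relabel_iff (hS : ∀ e, ∀ t ∈ lab e, t ∈ S) (hf : S.InjOn f)
    (hsep : ∀ a ∈ S, ∀ b ∈ S, Δ ≤ ((a : ℤ) - b).natAbs ↔ Δ' ≤ ((f a : ℤ) - f b).natAbs)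
    (k : ℕ) :
    (∃ M : Finset (Sym2 V × ℕ), IsTM lab Δ M ∧ k ≤ M.card) ↔
      ∃ M : Finset (Sym2 V × ℕ), IsTM (relabel f lab) Δ' M ∧ k ≤ M.card := by
  constructor
  · rintro ⟨M, hM, hk⟩
    have hMS : ∀ p ∈ M, p.2 ∈ S := fun p hp => hS _ _ (hM.1 p hp).2
    refine ⟨M.image (Prod.map id f), (isTM_image_map_iff hS hf hsep hMS).2 hM, ?_⟩
    rwa [Finset.card_image_of_injOn fun p hp q hq => injOn_prodMap_id hf (hMS p hp) (hMS q hq)]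
  · rintro ⟨M, hM, hk⟩
    have hsub : (M : Set (Sym2 V × ℕ)) ⊆ Prod.map id f '' {p | IsTimeEdge lab p} := by
      intro p hp
      obtain ⟨hdiag, hmem⟩ := hM.1 p hp
      obtain ⟨t, ht, hft⟩ := Finset.mem_image.1 hmem
      exact ⟨(p.1, t), ⟨hdiag, ht⟩, Prod.ext rfl hft⟩
    obtain ⟨N, hN, rfl⟩ := Finset.subset_set_image_iff.1 hsub
    have hNS : ∀ p ∈ N, p.2 ∈ S := fun p hp => hS _ _ (hN hp).2
    exact ⟨N, (isTM_image_map_iff hS hf hsep hNS).1 hM, hk.trans Finset.card_image_le⟩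

end Relabel

section InsertGap

variable {Δ a b : ℕ}

def insertGap (Δ t : ℕ) : ℕ := t + (t + Δ - 1) / Δ - 1

theorem ceilDiv_mono (h : a ≤ b) : (a + Δ - 1) / Δ ≤ (b + Δ - 1) / Δ :=
  Nat.div_le_div_right (by omega)

theorem ceilDiv_succ_le_of_add_le (hΔ : 0 < Δ) (h : a + Δ ≤ b) :
    (a + Δ - 1) / Δ + 1 ≤ (b + Δ - 1) / Δ := by
  rw [← Nat.add_div_right _ hΔ]
  exact Nat.div_le_div_right (by omega)

theorem ceilDiv_le_succ_of_lt_add (hΔ : 0 < Δ) (ha : 1 ≤ a) (h : b < a + Δ) :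
    (b + Δ - 1) / Δ ≤ (a + Δ - 1) / Δ + 1 := by
  calc (b + Δ - 1) / Δ ≤ (a - 1 + Δ - 1 + Δ) / Δ := Nat.div_le_div_right (by omega)
    _ = (a - 1 + Δ - 1) / Δ + 1 := Nat.add_div_right _ hΔ
    _ ≤ (a + Δ - 1) / Δ + 1 := by grw [ceilDiv_mono (show a - 1 ≤ a by omega)]

theorem insertGap_strictMonoOn : StrictMonoOn (insertGap Δ) (Set.Ici 1) := by
  intro a (ha : 1 ≤ a) b _ hab
  have := ceilDiv_mono (Δ := Δ) hab.le
  unfold insertGap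
  generalize (a + Δ - 1) / Δ = qa at *
  generalize (b + Δ - 1) / Δ = qb at *
  omega

theorem le_natAbs_sub_iff_insertGap (hΔ : 0 < Δ) (ha : 1 ≤ a) (hb : 1 ≤ b) :
    Δ ≤ ((a : ℤ) - b).natAbs ↔ Δ + 1 ≤ ((insertGap Δ a : ℤ) - insertGap Δ b).natAbs := by
  wlog hab : a ≤ b generalizing a b
  · rw [← Int.natAbs_neg, neg_sub, ← Int.natAbs_neg (insertGap Δ a - _ : ℤ), neg_sub]
    exact this hb ha (by omega)
  have hmono := ceilDiv_mono (Δ := Δ) hab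
  have hfar := ceilDiv_succ_le_of_add_le (a := a) (b := b) hΔ
  have hnear := ceilDiv_le_succ_of_lt_add (b := b) hΔ ha
  unfold insertGap
  generalize (a + Δ - 1) / Δ = qa at *
  generalize (b + Δ - 1) / Δ = qb at *
  omega

end InsertGap

theorem stmt2_general {V : Type*} [DecidableEq V]
    (lab : Sym2 V → Finset ℕ) (Δ k : ℕ) (hΔ : 1 ≤ Δ)
    (hpos : ∀ e, ∀ t ∈ lab e, 1 ≤ t) :
    (∃ M : Finset (Sym2 V × ℕ), IsTM lab Δ M ∧ k ≤ M.card) ↔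
    (∃ M : Finset (Sym2 V × ℕ),
      IsTM (fun e => (lab e).image (fun t => t + (t + Δ - 1) / Δ - 1)) (Δ + 1) M ∧
      k ≤ M.card) :=
  exists_isTM_relabel_iff (S := Set.Ici 1) (f := insertGap Δ) hpos insertGap_strictMonoOn.injOn
    (fun _ ha _ hb => le_natAbs_sub_iff_insertGap hΔ ha hb) k

/-- Inserting one edgeless snapshot after every `Δ` consecutive snapshots,
i.e., replacing each label `t` by `t + ⌈t/Δ⌉ - 1`, transforms Δ-temporal matchings into
(Δ+1)-temporal matchings: 𝒢 has a Δ-temporal matching of size ≥ k iff the shifted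
temporal graph has a (Δ+1)-temporal matching of size ≥ k. -/
theorem stmt2 {V : Type*} [Fintype V] [DecidableEq V]
    (lab : Sym2 V → Finset ℕ) (Δ k : ℕ) (hΔ : 1 ≤ Δ)
    (hpos : ∀ e, ∀ t ∈ lab e, 1 ≤ t) :
    (∃ M : Finset (Sym2 V × ℕ), IsTM lab Δ M ∧ k ≤ M.card) ↔
    (∃ M : Finset (Sym2 V × ℕ),
      IsTM (fun e => (lab e).image (fun t => t + (t + Δ - 1) / Δ - 1)) (Δ + 1) M ∧
      k ≤ M.card) :=
  stmt2_general lab Δ k hΔ hpos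
end

section
/- Let G=(V,E) be a cubic graph and let (H,λ) be the temporal graph obtained from G (and a proper 4-edge-coloring c of G) by the Construction. Let M be a 2-temporal matching of (H,λ). Then there exists a 2-temporal matching M' of (H,λ) with |M'| = |M| such that for every edge {u,v} ∈ E, M' contains at most one of the two time edges ({u_0,u_1},2) and ({v_0,v_1},2). -/
/-!
If an edge `e = {u, v}` of `G` has both rungs `({u₀,u₁},2)` and `({v₀,v₁},2)` in `M`, replace the
first by the spoke `({w_e, u_α}, t)` with `t ∈ {1, 3}`. All labels lie in `{1, 2, 3}`, so a time
edge of `M` meeting `u_α` conflicts with the rung at `u`, and one meeting `w_e` is a spoke of `e`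
and so conflicts with the rung at `u` or at `v`. Hence the spoke is disjoint from the rest of `M`,
and the exchange preserves the size while lowering the number of time edges labelled `2`.
-/

variable {V : Type*}

/-- The side `α ∈ {0,1}` (encoded as a `Bool`) of an edge `e`, determined by
`α ≡ c(e) (mod 2)` where `c(e) ∈ {1,2,3,4}` is the color of `e`. -/
def aV {V : Type*} (c : Sym2 V → ℕ) (e : Sym2 V) : Bool := c e % 2 == 1

/-- The time slot of the two edges incident to `w_e`: 1 if `c(e) ∈ {1,2}`, 3 if
`c(e) ∈ {3,4}`. -/
def tE {V : Type*} (c : Sym2 V → ℕ) (e : Sym2 V) : ℕ := if c e ≤ 2 then 1 else 3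

/-- `c` is a proper 4-edge-coloring of `G` with colors in `{1,2,3,4}`. -/
def ProperEC {V : Type*} (G : SimpleGraph V) (c : Sym2 V → ℕ) : Prop :=
  (∀ e ∈ G.edgeSet, 1 ≤ c e ∧ c e ≤ 4) ∧
  ∀ e ∈ G.edgeSet, ∀ e' ∈ G.edgeSet, e ≠ e' → (∃ v, v ∈ e ∧ v ∈ e') → c e ≠ c e'

/-- The time-labeling `lab` (on the vertex set `(V × Bool) ⊕ Sym2 V`, where
`(v, false)` plays the role of `v₀`, `(v, true)` of `v₁`, and `Sum.inr e` of `w_e`)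
is exactly the temporal graph `(H, λ)` of the Construction applied to `G` and `c`:
every edge `{v₀,v₁}` has label set `{2}`; for every edge `e` of `G` and each endpoint
`u ∈ e`, the edge `{w_e, u_α}` has label set `{tE c e}`; and no other pair carries
any label. -/
def IsConstruction {V : Type*} (G : SimpleGraph V) (c : Sym2 V → ℕ)
    (lab : Sym2 ((V × Bool) ⊕ Sym2 V) → Finset ℕ) : Prop :=
  (∀ v : V, lab s(Sum.inl (v, false), Sum.inl (v, true)) = {2}) ∧
  (∀ e ∈ G.edgeSet, ∀ u, u ∈ e →
    lab s(Sum.inr e, Sum.inl (u, aV c e)) = {tE c e}) ∧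
  (∀ f : Sym2 ((V × Bool) ⊕ Sym2 V), (lab f).Nonempty →
    (∃ v : V, f = s(Sum.inl (v, false), Sum.inl (v, true))) ∨
    (∃ e ∈ G.edgeSet, ∃ u, u ∈ e ∧ f = s(Sum.inr e, Sum.inl (u, aV c e))))

section TemporalMatching

variable {α : Type*} {lab : Sym2 α → Finset ℕ} {Δ : ℕ} {M : Finset (Sym2 α × ℕ)}
  {p q s : Sym2 α × ℕ}

theorem IsTM.notMem_of_natAbs_sub_lt (hM : IsTM lab Δ M) (hp : p ∈ M) (hq : q ∈ M)
    (hpq : p ≠ q) (ht : ((p.2 : ℤ) - q.2).natAbs < Δ) {x : α} (hx : x ∈ p.1) : x ∉ q.1 :=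
  (hM.2 p hp q hq hpq).resolve_right (not_le.2 ht) x hx

variable [DecidableEq α]

theorem IsTM.insert_erase (hM : IsTM lab Δ M) (hs : IsTimeEdge lab s)
    (hdisj : ∀ q ∈ M.erase p, ∀ x ∈ s.1, x ∉ q.1) : IsTM lab Δ (insert s (M.erase p)) := by
  refine ⟨fun q hq => ?_, fun q hq r hr hqr => ?_⟩
  · rcases Finset.mem_insert.1 hq with hqs | hq
    exacts [hqs ▸ hs, hM.1 q (Finset.mem_of_mem_erase hq)]
  · rcases Finset.mem_insert.1 hq with hqs | hq <;> rcases Finset.mem_insert.1 hr with hrs | hr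
    · exact absurd (hqs.trans hrs.symm) hqr
    · exact Or.inl fun x hx => hdisj r hr x (hqs ▸ hx)
    · exact Or.inl fun x hxq hxr => hdisj q hq x (hrs ▸ hxr) hxq
    · exact hM.2 q (Finset.mem_of_mem_erase hq) r (Finset.mem_of_mem_erase hr) hqr

theorem card_insert_erase_of_disjoint (hp : p ∈ M)
    (hdisj : ∀ q ∈ M.erase p, ∀ x ∈ s.1, x ∉ q.1) : (insert s (M.erase p)).card = M.card := by
  have hs : s ∉ M.erase p := fun hs => hdisj s hs _ s.1.out_fst_mem s.1.out_fst_mem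
  rw [Finset.card_insert_of_notMem hs, Finset.card_erase_add_one hp]

end TemporalMatching

section Construction

variable {G : SimpleGraph V} {c : Sym2 V → ℕ} {lab : Sym2 ((V × Bool) ⊕ Sym2 V) → Finset ℕ}
  {M : Finset (Sym2 ((V × Bool) ⊕ Sym2 V) × ℕ)} {q : Sym2 ((V × Bool) ⊕ Sym2 V) × ℕ}

/-- The time edge `({v₀, v₁}, 2)`. -/
def rung (v : V) : Sym2 ((V × Bool) ⊕ Sym2 V) × ℕ := (s(Sum.inl (v, false), Sum.inl (v, true)), 2)

/-- The time edge `({w_e, u_α}, t)` of the Construction, for an endpoint `u` of `e`. -/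
def spoke (c : Sym2 V → ℕ) (e : Sym2 V) (u : V) : Sym2 ((V × Bool) ⊕ Sym2 V) × ℕ :=
  (s(Sum.inr e, Sum.inl (u, aV c e)), tE c e)

theorem inl_mem_rung (v : V) (b : Bool) : Sum.inl (v, b) ∈ (rung v).1 := by
  cases b <;> simp [rung]

theorem inr_notMem_rung (e : Sym2 V) (v : V) : Sum.inr e ∉ (rung v).1 := by
  simp [rung]

theorem tE_eq_one_or_three (c : Sym2 V → ℕ) (e : Sym2 V) : tE c e = 1 ∨ tE c e = 3 := by
  unfold tE; split <;> simp

theorem IsConstruction.isTimeEdge_spoke (hcons : IsConstruction G c lab) {e : Sym2 V}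
    (he : e ∈ G.edgeSet) {u : V} (hu : u ∈ e) : IsTimeEdge lab (spoke c e u) :=
  ⟨by simp [spoke], by rw [spoke, hcons.2.1 e he u hu]; exact Finset.mem_singleton_self _⟩

theorem IsConstruction.natAbs_sub_two_lt (hcons : IsConstruction G c lab)
    (hq : IsTimeEdge lab q) : ((q.2 : ℤ) - 2).natAbs < 2 := by
  have ht := hq.2
  rcases hcons.2.2 q.1 ⟨q.2, ht⟩ with ⟨v, hv⟩ | ⟨e, he, u, hu, hf⟩
  · rw [hv, hcons.1 v, Finset.mem_singleton] at ht
    omega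
  · rw [hf, hcons.2.1 e he u hu, Finset.mem_singleton] at ht
    rcases tE_eq_one_or_three c e with h | h <;> omega

theorem IsConstruction.exists_inl_mem_of_inr_mem (hcons : IsConstruction G c lab)
    (hq : IsTimeEdge lab q) {e : Sym2 V} (he : Sum.inr e ∈ q.1) :
    ∃ w ∈ e, Sum.inl (w, aV c e) ∈ q.1 := by
  rcases hcons.2.2 q.1 ⟨q.2, hq.2⟩ with ⟨v, hv⟩ | ⟨e', -, w, hw, hf⟩
  · simp [hv] at he
  · obtain rfl : e = e' := by simpa [hf] using he
    exact ⟨w, hw, by simp [hf]⟩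

-- Every label lies in `{1, 2, 3}`, less than `2` away from the label of a rung.
theorem IsConstruction.inl_notMem_of_rung_mem (hcons : IsConstruction G c lab)
    (hM : IsTM lab 2 M) {w : V} (hw : rung w ∈ M) (hq : q ∈ M) (hne : rung w ≠ q) (b : Bool) :
    Sum.inl (w, b) ∉ q.1 := by
  refine hM.notMem_of_natAbs_sub_lt hw hq hne ?_ (inl_mem_rung w b)
  have := hcons.natAbs_sub_two_lt (hM.1 q hq)
  simp only [rung] at this ⊢
  omega

variable [DecidableEq V]

theorem IsConstruction.spoke_disjoint (hcons : IsConstruction G c lab) (hM : IsTM lab 2 M)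
    {u v : V} (hu : rung u ∈ M) (hv : rung v ∈ M) :
    ∀ q ∈ M.erase (rung u), ∀ x ∈ (spoke c s(u, v) u).1, x ∉ q.1 := by
  intro q hq x hx hxq
  have hqM := Finset.mem_of_mem_erase hq
  rcases Sym2.mem_iff.1 hx with rfl | rfl
  · obtain ⟨w, hw, hwq⟩ := hcons.exists_inl_mem_of_inr_mem (hM.1 q hqM) hxq
    have hne : ∀ z, rung z ≠ q := fun z h => inr_notMem_rung _ z (h ▸ hxq)
    rcases Sym2.mem_iff.1 hw with rfl | rfl
    exacts [hcons.inl_notMem_of_rung_mem hM hu hqM (hne w) _ hwq,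
      hcons.inl_notMem_of_rung_mem hM hv hqM (hne w) _ hwq]
  · exact hcons.inl_notMem_of_rung_mem hM hu hqM (Finset.ne_of_mem_erase hq).symm _ hxq

theorem IsConstruction.exists_isTM_card_eq_forall_adj_not_rung_mem
    (hcons : IsConstruction G c lab) (M : Finset (Sym2 ((V × Bool) ⊕ Sym2 V) × ℕ))
    (hM : IsTM lab 2 M) :
    ∃ M' : Finset (Sym2 ((V × Bool) ⊕ Sym2 V) × ℕ), IsTM lab 2 M' ∧ M'.card = M.card ∧
      ∀ u v : V, G.Adj u v → ¬(rung u ∈ M' ∧ rung v ∈ M') := by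
  by_cases hbad : ∃ u v : V, G.Adj u v ∧ rung u ∈ M ∧ rung v ∈ M
  · obtain ⟨u, v, huv, hu, hv⟩ := hbad
    have hdisj := hcons.spoke_disjoint hM hu hv
    have hspoke := hcons.isTimeEdge_spoke huv (Sym2.mem_mk_left u v)
    obtain ⟨M', hM', hcard, hgood⟩ := hcons.exists_isTM_card_eq_forall_adj_not_rung_mem _
      (hM.insert_erase hspoke hdisj)
    exact ⟨M', hM', hcard.trans (card_insert_erase_of_disjoint hu hdisj), hgood⟩
  · exact ⟨M, hM, rfl, fun u v huv h => hbad ⟨u, v, huv, h⟩⟩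
termination_by (M.filter (·.2 = 2)).card
decreasing_by
  have hspoke : (spoke c s(u, v) u).2 ≠ 2 := by
    rcases tE_eq_one_or_three c s(u, v) with h | h <;> simp [spoke, h]
  rw [Finset.filter_insert, if_neg hspoke, Finset.filter_erase]
  exact Finset.card_lt_card (Finset.erase_ssubset (Finset.mem_filter.2 ⟨hu, rfl⟩))

end Construction

theorem stmt4_general {V : Type*}
    (G : SimpleGraph V)
    (c : Sym2 V → ℕ)
    (lab : Sym2 ((V × Bool) ⊕ Sym2 V) → Finset ℕ) (hcons : IsConstruction G c lab)
    (M : Finset (Sym2 ((V × Bool) ⊕ Sym2 V) × ℕ)) (hM : IsTM lab 2 M) :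
    ∃ M' : Finset (Sym2 ((V × Bool) ⊕ Sym2 V) × ℕ),
      IsTM lab 2 M' ∧ M'.card = M.card ∧
      ∀ u v : V, G.Adj u v →
        ¬((s(Sum.inl (u, false), Sum.inl (u, true)), 2) ∈ M' ∧
          (s(Sum.inl (v, false), Sum.inl (v, true)), 2) ∈ M') := by
  classical
  exact hcons.exists_isTM_card_eq_forall_adj_not_rung_mem M hM

/-- For a cubic graph `G` with a proper 4-edge-coloring `c` and the
temporal graph `(H,λ)` of the Construction, every 2-temporal matching `M` of `(H,λ)`
can be transformed into a 2-temporal matching `M'` with `|M'| = |M|` such that for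
every edge `{u,v}` of `G`, `M'` contains at most one of `({u₀,u₁},2)` and
`({v₀,v₁},2)`. -/
theorem stmt4 {V : Type*} [Fintype V] [DecidableEq V]
    (G : SimpleGraph V) [DecidableRel G.Adj] (hcubic : ∀ v : V, G.degree v = 3)
    (c : Sym2 V → ℕ) (hc : ProperEC G c)
    (lab : Sym2 ((V × Bool) ⊕ Sym2 V) → Finset ℕ) (hcons : IsConstruction G c lab)
    (M : Finset (Sym2 ((V × Bool) ⊕ Sym2 V) × ℕ)) (hM : IsTM lab 2 M) :
    ∃ M' : Finset (Sym2 ((V × Bool) ⊕ Sym2 V) × ℕ),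
      IsTM lab 2 M' ∧ M'.card = M.card ∧
      ∀ u v : V, G.Adj u v →
        ¬((s(Sum.inl (u, false), Sum.inl (u, true)), 2) ∈ M' ∧
          (s(Sum.inl (v, false), Sum.inl (v, true)), 2) ∈ M') :=
  stmt4_general G c lab hcons M hM
end

section
/- Let G=(V,E) be a cubic graph with |V|=n and let (H,λ) be the temporal graph obtained from G (and a proper 4-edge-coloring c of G) by the Construction. Let M be a 2-temporal matching of (H,λ). Then G contains an independent set of size at least |M| − 3n/2. -/
variable {V : Type*}

/-!
Let `A` be the set of vertices `v` whose edge `{v₀, v₁}` (label 2) lies in `M`. Every other time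
edge of `M` is `({w_e, u_α}, t)` with label `t ∈ {1, 3}`; it meets `{u₀, u₁}` one time step away,
so `u ∉ A`, and two of them at the same `w_e` would collide. Hence `|M| ≤ |A| + #{e ∈ E : e ⊄ A}`.
Deleting one endpoint of each edge inside `A` leaves an independent set `S` with
`|A| ≤ |S| + #{e ∈ E : e ⊆ A}`, so `|M| ≤ |S| + |E| = |S| + 3n/2`.
-/

open Finset

namespace SimpleGraph

lemma exists_isIndepF_card_le_card_add [Fintype V] [DecidableEq V] (G : SimpleGraph V)
    [DecidableRel G.Adj] (A : Finset V) :
    ∃ S : Finset V, IsIndepF G S ∧ #A ≤ #S + #(G.edgeFinset ∩ A.sym2) := by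
  set T : Finset V := (G.edgeFinset ∩ A.sym2).image fun e => e.out.1
  refine ⟨A \ T, ?_, ?_⟩
  · intro u hu v hv huv
    have hT : (s(u, v)).out.1 ∈ T :=
      mem_image_of_mem _ (mem_inter.2 ⟨mem_edgeFinset.2 huv,
        mk_mem_sym2_iff.2 ⟨(mem_sdiff.1 hu).1, (mem_sdiff.1 hv).1⟩⟩)
    rcases Sym2.mem_iff.1 (Sym2.out_fst_mem s(u, v)) with h | h
    · exact (mem_sdiff.1 hu).2 (h ▸ hT)
    · exact (mem_sdiff.1 hv).2 (h ▸ hT)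
  · have := le_card_sdiff T A
    have : #T ≤ #(G.edgeFinset ∩ A.sym2) := card_image_le
    omega

lemma IsRegularOfDegree.two_mul_card_edgeFinset [Fintype V] {G : SimpleGraph V}
    [DecidableRel G.Adj] {k : ℕ} (hG : G.IsRegularOfDegree k) :
    2 * #G.edgeFinset = k * Fintype.card V := by
  rw [← sum_degrees_eq_twice_card_edges, sum_congr rfl fun v _ => hG v, sum_const, card_univ,
    smul_eq_mul, mul_comm]

end SimpleGraph

lemma IsTM.eq_of_mem_of_mem {lab : Sym2 V → Finset ℕ} {Δ : ℕ} {M : Finset (Sym2 V × ℕ)}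
    (hM : IsTM lab Δ M) {p q : Sym2 V × ℕ} (hp : p ∈ M) (hq : q ∈ M) {x : V} (hxp : x ∈ p.1)
    (hxq : x ∈ q.1) (hpq : ((p.2 : ℤ) - q.2).natAbs < Δ) : p = q := by
  by_contra hne
  rcases hM.2 p hp q hq hne with hdisj | hfar
  · exact hdisj x hxp hxq
  · omega

section Construction

variable {G : SimpleGraph V} {c : Sym2 V → ℕ} {lab : Sym2 ((V × Bool) ⊕ Sym2 V) → Finset ℕ}

-- The edges `{v₀, v₁}` and `{w_e, u_α}` of `H`.
def vertexEdge (v : V) : Sym2 ((V × Bool) ⊕ Sym2 V) := s(Sum.inl (v, false), Sum.inl (v, true))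

def subdivEdge (c : Sym2 V → ℕ) (e : Sym2 V) (u : V) : Sym2 ((V × Bool) ⊕ Sym2 V) :=
  s(Sum.inr e, Sum.inl (u, aV c e))

lemma natAbs_tE_sub_two (c : Sym2 V → ℕ) (e : Sym2 V) : ((tE c e : ℤ) - 2).natAbs = 1 := by
  unfold tE; split_ifs <;> rfl

lemma IsConstruction.timeEdge_cases (hcons : IsConstruction G c lab)
    {p : Sym2 ((V × Bool) ⊕ Sym2 V) × ℕ} (hp : IsTimeEdge lab p) :
    (∃ v, p = (vertexEdge v, 2)) ∨ ∃ e ∈ G.edgeSet, ∃ u ∈ e, p = (subdivEdge c e u, tE c e) := by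
  obtain ⟨hvert, hsubdiv, hsupp⟩ := hcons
  have hlab : p.2 ∈ lab p.1 := hp.2
  rcases hsupp p.1 ⟨p.2, hlab⟩ with ⟨v, hv⟩ | ⟨e, he, u, hu, hf⟩
  · rw [hv, hvert, mem_singleton] at hlab
    exact .inl ⟨v, Prod.ext hv hlab⟩
  · rw [hf, hsubdiv e he u hu, mem_singleton] at hlab
    exact .inr ⟨e, he, u, hu, Prod.ext hf hlab⟩

lemma IsTM.card_le_of_isConstruction [Fintype V] [DecidableEq V] [DecidableRel G.Adj]
    (hcons : IsConstruction G c lab) {M : Finset (Sym2 ((V × Bool) ⊕ Sym2 V) × ℕ)}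
    (hM : IsTM lab 2 M) {A : Finset V} (hA : ∀ v, v ∈ A ↔ (vertexEdge v, 2) ∈ M) :
    #M ≤ #A + #(G.edgeFinset \ A.sym2) := by
  let r (p : Sym2 ((V × Bool) ⊕ Sym2 V) × ℕ) : V ⊕ Sym2 V → Prop :=
    Sum.elim (fun v => p = (vertexEdge v, 2)) fun e => ∃ u ∈ e, p = (subdivEdge c e u, tE c e)
  rw [← card_disjSum]
  refine card_le_card_of_forall_subsingleton r (fun p hp => ?_) ?_
  · rcases hcons.timeEdge_cases (hM.1 p hp) with ⟨v, rfl⟩ | ⟨e, he, u, hu, rfl⟩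
    · exact ⟨.inl v, inl_mem_disjSum.2 ((hA v).2 hp), rfl⟩
    refine ⟨.inr e, inr_mem_disjSum.2 <|
      mem_sdiff.2 ⟨SimpleGraph.mem_edgeFinset.2 he, fun heA => ?_⟩, u, hu, rfl⟩
    -- `{w_e, u_α}` at time `tE c e` and `{u₀, u₁}` at time 2 share `u_α`
    have huA : (vertexEdge u, 2) ∈ M := (hA u).1 (mem_sym2_iff.1 heA u hu)
    have h2 : tE c e = 2 := congrArg Prod.snd <| hM.eq_of_mem_of_mem hp huA
      (x := .inl (u, aV c e)) (by simp [subdivEdge]) (by cases aV c e <;> simp [vertexEdge])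
      (by simp [natAbs_tE_sub_two])
    have := natAbs_tE_sub_two c e
    omega
  · rintro (v | e) -
    · rintro p ⟨-, rfl⟩ q ⟨-, rfl⟩
      rfl
    · rintro p ⟨hp, u, -, rfl⟩ q ⟨hq, u', -, rfl⟩
      exact hM.eq_of_mem_of_mem hp hq (x := .inr e) (by simp [subdivEdge])
        (by simp [subdivEdge]) (by simp)

end Construction

theorem stmt5_general {V : Type*} [Fintype V]
    (G : SimpleGraph V) [DecidableRel G.Adj] (hcubic : ∀ v : V, G.degree v = 3)
    (c : Sym2 V → ℕ)
    (lab : Sym2 ((V × Bool) ⊕ Sym2 V) → Finset ℕ) (hcons : IsConstruction G c lab)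
    (M : Finset (Sym2 ((V × Bool) ⊕ Sym2 V) × ℕ)) (hM : IsTM lab 2 M) :
    ∃ S : Finset V, IsIndepF G S ∧ 2 * M.card ≤ 2 * S.card + 3 * Fintype.card V := by
  classical
  obtain ⟨A, hA⟩ : ∃ A : Finset V, ∀ v, v ∈ A ↔ (vertexEdge v, 2) ∈ M :=
    ⟨univ.filter fun v => (vertexEdge v, 2) ∈ M, by simp⟩
  obtain ⟨S, hS, hAS⟩ := G.exists_isIndepF_card_le_card_add A
  refine ⟨S, hS, ?_⟩
  have hMA := hM.card_le_of_isConstruction hcons hA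
  have hE := card_sdiff_add_card_inter G.edgeFinset A.sym2
  have hn := SimpleGraph.IsRegularOfDegree.two_mul_card_edgeFinset hcubic
  omega

/-- For a cubic graph `G` on `n` vertices with a proper 4-edge-coloring `c`
and the temporal graph `(H,λ)` of the Construction, from any 2-temporal matching `M` of
`(H,λ)` one obtains an independent set `S` of `G` of size at least `|M| - 3n/2`
(stated multiplied by 2 to avoid division: `2|M| ≤ 2|S| + 3n`). -/
theorem stmt5 {V : Type*} [Fintype V] [DecidableEq V]
    (G : SimpleGraph V) [DecidableRel G.Adj] (hcubic : ∀ v : V, G.degree v = 3)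
    (c : Sym2 V → ℕ) (hc : ProperEC G c)
    (lab : Sym2 ((V × Bool) ⊕ Sym2 V) → Finset ℕ) (hcons : IsConstruction G c lab)
    (M : Finset (Sym2 ((V × Bool) ⊕ Sym2 V) × ℕ)) (hM : IsTM lab 2 M) :
    ∃ S : Finset V, IsIndepF G S ∧ 2 * M.card ≤ 2 * S.card + 3 * Fintype.card V :=
  stmt5_general G hcubic c lab hcons M hM
end

section
/- Let G=(V,E) be a cubic graph with |V|=n and let (H,λ) be the temporal graph obtained from G (and a proper 4-edge-coloring c of G) by the Construction. Then μ_2(H,λ) ≤ 7·α(G), where μ_2(H,λ) is the maximum cardinality of a 2-temporal matching of (H,λ) and α(G) is the maximum cardinality of an independent set of G. -/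
variable {V : Type*}

/-! In a 2-temporal matching `M` of `H`, a rung `({v₀, v₁}, 2)` and a spoke `({w_e, v_α}, t)` with
`t ∈ {1, 3}` meet at `v_α` with labels less than 2 apart, so they are never both in `M`; and the
two spokes at `w_e` share `w_e` and their label, so `M` holds at most one of them. Hence, if `A` is
the set of vertices whose rung lies in `M`, no edge of `G` inside `A` carries a spoke of `M`, and
`|M| ≤ |A| + (|E| - e(A))`. Deleting one endpoint of every edge inside `A` leaves an independent
set, so `|A| - e(A) ≤ α(G)` and `|M| ≤ α(G) + |E| = α(G) + 3n/2`. Finally `n ≤ 4 α(G)` by the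
greedy bound for graphs of maximum degree 3. -/

open Finset

lemma isIndepF_insert {G : SimpleGraph V} [DecidableEq V] {v : V} {S : Finset V} :
    IsIndepF G (insert v S) ↔ IsIndepF G S ∧ ∀ w ∈ S, ¬ G.Adj v w := by
  simp only [IsIndepF, mem_insert, forall_eq_or_imp, G.irrefl, not_false_eq_true, true_and]
  exact ⟨fun h => ⟨fun u hu w hw => h.2 u hu |>.2 w hw, h.1⟩,
    fun h => ⟨h.2, fun u hu => ⟨fun huv => h.2 u hu huv.symm, h.1 u hu⟩⟩⟩

lemma IsIndepF.card_le_indepNum [Fintype V] {G : SimpleGraph V} {S : Finset V}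
    (hS : IsIndepF G S) : S.card ≤ indepNum G :=
  le_csSup ⟨Fintype.card V, by rintro k ⟨T, -, rfl⟩; exact card_le_univ T⟩ ⟨S, hS, rfl⟩

lemma exists_isIndepF_subset_card_le_mul [Fintype V] (G : SimpleGraph V) [DecidableRel G.Adj]
    {d : ℕ} (hdeg : ∀ v, G.degree v ≤ d) (B : Finset V) :
    ∃ S ⊆ B, IsIndepF G S ∧ B.card ≤ (d + 1) * S.card := by
  classical
  induction B using Finset.strongInduction with
  | H B ih =>
    obtain rfl | ⟨v, hv⟩ := B.eq_empty_or_nonempty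
    · exact ⟨∅, empty_subset _, by simp [IsIndepF], by simp⟩
    set N := insert v (G.neighborFinset v)
    obtain ⟨S, hSB, hS, hcard⟩ := ih (B \ N) ((ssubset_iff_of_subset sdiff_subset).2
      ⟨v, hv, fun h => (mem_sdiff.1 h).2 (mem_insert_self v _)⟩)
    have hvS : v ∉ S := fun h => (mem_sdiff.1 (hSB h)).2 (mem_insert_self v _)
    have hN : N.card ≤ d + 1 :=
      (card_insert_le _ _).trans (by simpa [G.card_neighborFinset_eq_degree] using hdeg v)
    have hB : B.card ≤ (B \ N).card + N.card := by
      rw [card_sdiff_add_card]; exact card_le_card subset_union_left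
    refine ⟨insert v S, insert_subset hv (hSB.trans sdiff_subset), ?_, ?_⟩
    · exact isIndepF_insert.2 ⟨hS, fun w hw hvw =>
        (mem_sdiff.1 (hSB hw)).2 (mem_insert_of_mem ((G.mem_neighborFinset v w).2 hvw))⟩
    · rw [card_insert_of_notMem hvS, mul_add_one]
      omega

lemma card_le_mul_indepNum [Fintype V] (G : SimpleGraph V) [DecidableRel G.Adj] {d : ℕ}
    (hdeg : ∀ v, G.degree v ≤ d) : Fintype.card V ≤ (d + 1) * indepNum G := by
  obtain ⟨S, -, hS, hcard⟩ := exists_isIndepF_subset_card_le_mul G hdeg univ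
  exact (card_univ (α := V) ▸ hcard).trans (Nat.mul_le_mul_left _ hS.card_le_indepNum)

lemma exists_isIndepF_card_le_add (G : SimpleGraph V) (A : Finset V) (I : Finset (Sym2 V))
    (hI : ∀ u ∈ A, ∀ v ∈ A, G.Adj u v → s(u, v) ∈ I) :
    ∃ S ⊆ A, IsIndepF G S ∧ A.card ≤ S.card + I.card := by
  classical
  refine ⟨A \ I.image (fun e => e.out.1), sdiff_subset, ?_, ?_⟩
  · intro u hu v hv huv
    have hremoved := mem_image_of_mem (fun e => e.out.1)
      (hI u (mem_sdiff.1 hu).1 v (mem_sdiff.1 hv).1 huv)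
    rcases Sym2.mem_iff.1 (Sym2.out_fst_mem s(u, v)) with h | h
    · exact (mem_sdiff.1 hu).2 (h ▸ hremoved)
    · exact (mem_sdiff.1 hv).2 (h ▸ hremoved)
  · have hsdiff := le_card_sdiff (I.image fun e => e.out.1) A
    have himage := card_image_le (s := I) (f := fun e => e.out.1)
    omega

lemma IsTM.le_natAbs_sub {W : Type*} {lab : Sym2 W → Finset ℕ} {Δ : ℕ} {M : Finset (Sym2 W × ℕ)}
    (hM : IsTM lab Δ M) {p q : Sym2 W × ℕ} (hp : p ∈ M) (hq : q ∈ M) (hpq : p ≠ q) {x : W}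
    (hxp : x ∈ p.1) (hxq : x ∈ q.1) : Δ ≤ ((p.2 : ℤ) - q.2).natAbs :=
  (hM.2 p hp q hq hpq).resolve_left fun h => h x hxp hxq

lemma tmu_le {W : Type*} {lab : Sym2 W → Finset ℕ} {Δ k : ℕ}
    (h : ∀ M, IsTM lab Δ M → M.card ≤ k) : tmu lab Δ ≤ k :=
  csSup_le ⟨0, ∅, ⟨by simp, by simp⟩, rfl⟩ (by rintro _ ⟨M, hM, rfl⟩; exact h M hM)

section Construction

variable {G : SimpleGraph V} {c : Sym2 V → ℕ} {lab : Sym2 ((V × Bool) ⊕ Sym2 V) → Finset ℕ}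

def rungTimeEdge (v : V) : Sym2 ((V × Bool) ⊕ Sym2 V) × ℕ :=
  (s(.inl (v, false), .inl (v, true)), 2)

def spokeTimeEdge (c : Sym2 V → ℕ) (e : Sym2 V) (u : V) : Sym2 ((V × Bool) ⊕ Sym2 V) × ℕ :=
  (s(.inr e, .inl (u, aV c e)), tE c e)

lemma IsConstruction.isTimeEdge_cases (hcons : IsConstruction G c lab)
    {p : Sym2 ((V × Bool) ⊕ Sym2 V) × ℕ} (hp : IsTimeEdge lab p) :
    (∃ v, p = rungTimeEdge v) ∨ ∃ e ∈ G.edgeSet, ∃ u ∈ e, p = spokeTimeEdge c e u := by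
  obtain ⟨f, t⟩ := p
  have ht : t ∈ lab f := hp.2
  rcases hcons.2.2 f ⟨t, ht⟩ with ⟨v, rfl⟩ | ⟨e, he, u, hu, rfl⟩
  · rw [hcons.1 v, mem_singleton] at ht
    exact .inl ⟨v, by rw [ht, rungTimeEdge]⟩
  · rw [hcons.2.1 e he u hu, mem_singleton] at ht
    exact .inr ⟨e, he, u, hu, by rw [ht, spokeTimeEdge]⟩

variable {M : Finset (Sym2 ((V × Bool) ⊕ Sym2 V) × ℕ)}

lemma eq_of_spokeTimeEdge_mem (hM : IsTM lab 2 M) {e : Sym2 V} {u u' : V}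
    (hu : spokeTimeEdge c e u ∈ M) (hu' : spokeTimeEdge c e u' ∈ M) :
    spokeTimeEdge c e u = spokeTimeEdge c e u' := by
  by_contra hne
  have := hM.le_natAbs_sub hu hu' hne (x := .inr e) (Sym2.mem_mk_left _ _) (Sym2.mem_mk_left _ _)
  simp [spokeTimeEdge] at this

lemma rungTimeEdge_notMem_of_spokeTimeEdge_mem (hM : IsTM lab 2 M) {e : Sym2 V} {u : V}
    (hu : spokeTimeEdge c e u ∈ M) : rungTimeEdge u ∉ M := by
  intro hr
  have htE : tE c e = 1 ∨ tE c e = 3 := by unfold tE; split_ifs <;> simp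
  have hne : spokeTimeEdge c e u ≠ rungTimeEdge u := fun h => by
    have := congrArg Prod.snd h
    simp only [spokeTimeEdge, rungTimeEdge] at this
    omega
  have := hM.le_natAbs_sub hu hr hne (x := .inl (u, aV c e)) (Sym2.mem_mk_right _ _)
    (by cases aV c e <;> simp [rungTimeEdge])
  simp only [spokeTimeEdge, rungTimeEdge] at this
  omega

lemma IsConstruction.card_le_indepNum_add_card_edgeFinset [Fintype V] [Fintype G.edgeSet]
    (hcons : IsConstruction G c lab) (hM : IsTM lab 2 M) :
    M.card ≤ indepNum G + #G.edgeFinset := by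
  classical
  set A : Finset V := {v | rungTimeEdge v ∈ M}
  set F : Finset (Sym2 V) := {e ∈ G.edgeFinset | ∃ u ∈ e, spokeTimeEdge c e u ∈ M}
  have hMAF : M.card ≤ A.card + F.card := by
    rw [← card_disjSum]
    refine card_le_card_of_forall_subsingleton
      (fun p x => x.elim (p = rungTimeEdge ·) (fun e => ∃ u, p = spokeTimeEdge c e u)) ?_ ?_
    · intro p hp
      rcases hcons.isTimeEdge_cases (hM.1 p hp) with ⟨v, rfl⟩ | ⟨e, he, u, hu, rfl⟩
      · exact ⟨.inl v, by simpa [A] using hp, rfl⟩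
      · exact ⟨.inr e, by simpa [F] using ⟨he, u, hu, hp⟩, u, rfl⟩
    · rintro (v | e) - p ⟨hpM, hp⟩ q ⟨hqM, hq⟩
      · exact hp.trans hq.symm
      · obtain ⟨⟨u, rfl⟩, ⟨u', rfl⟩⟩ := And.intro hp hq
        exact eq_of_spokeTimeEdge_mem hM hpM hqM
  have hAF : ∀ u ∈ A, ∀ v ∈ A, G.Adj u v → s(u, v) ∈ G.edgeFinset \ F := by
    intro u hu v hv huv
    refine mem_sdiff.2 ⟨G.mem_edgeFinset.2 huv, fun he => ?_⟩
    obtain ⟨-, w, hw, hwM⟩ := mem_filter.1 he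
    have hwA : w ∈ A := by rcases Sym2.mem_iff.1 hw with rfl | rfl <;> assumption
    exact rungTimeEdge_notMem_of_spokeTimeEdge_mem hM hwM (mem_filter.1 hwA).2
  obtain ⟨S, -, hS, hA⟩ := exists_isIndepF_card_le_add G A _ hAF
  have hFE : F ⊆ G.edgeFinset := filter_subset _ _
  have hsdiff := card_sdiff_of_subset hFE
  have hF := card_le_card hFE
  have hSα := hS.card_le_indepNum
  omega

end Construction

theorem stmt7_general {V : Type*} [Fintype V]
    (G : SimpleGraph V) [DecidableRel G.Adj] (hcubic : ∀ v : V, G.degree v = 3)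
    (c : Sym2 V → ℕ)
    (lab : Sym2 ((V × Bool) ⊕ Sym2 V) → Finset ℕ) (hcons : IsConstruction G c lab) :
    tmu lab 2 ≤ 7 * indepNum G := by
  classical
  have hV : Fintype.card V ≤ 4 * indepNum G := card_le_mul_indepNum G fun v => (hcubic v).le
  have hE : 2 * #G.edgeFinset = 3 * Fintype.card V := by
    simp [← G.sum_degrees_eq_twice_card_edges, hcubic, mul_comm]
  refine tmu_le fun M hM => ?_
  have hM_le := hcons.card_le_indepNum_add_card_edgeFinset hM
  omega

/-- For a cubic graph `G` with a proper 4-edge-coloring `c` and the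
temporal graph `(H,λ)` of the Construction, `μ₂(H,λ) ≤ 7·α(G)`. -/
theorem stmt7 {V : Type*} [Fintype V] [DecidableEq V]
    (G : SimpleGraph V) [DecidableRel G.Adj] (hcubic : ∀ v : V, G.degree v = 3)
    (c : Sym2 V → ℕ) (hc : ProperEC G c)
    (lab : Sym2 ((V × Bool) ⊕ Sym2 V) → Finset ℕ) (hcons : IsConstruction G c lab) :
    tmu lab 2 ≤ 7 * indepNum G :=
  stmt7_general G hcubic c lab hcons
end

section
/- Let n ≥ 2 and T ≥ 1, and let 𝒢 = (P_n, λ) be the temporal graph on the path P_n with λ(e) = [T] for every edge e of P_n (every edge active at every time slot). Then the 2-temporal line graph L_2(𝒢) is isomorphic to the diagonal grid graph Z^D_{n−1,T}. -/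
variable {V : Type*}

/-- The diagonal grid graph (king's graph) `Z^D_{n,m}` on vertex set `Fin n × Fin m`:
`v_{i,j}` and `v_{i',j'}` are adjacent iff they are distinct and
`|i-i'|² + |j-j'|² ≤ 2`. -/
def diagGrid (n m : ℕ) : SimpleGraph (Fin n × Fin m) where
  Adj p q := p ≠ q ∧ ((p.1 : ℤ) - (q.1 : ℤ)) ^ 2 + ((p.2 : ℤ) - (q.2 : ℤ)) ^ 2 ≤ 2
  symm := by
    constructor
    intro p q h
    refine ⟨h.1.symm, ?_⟩
    have heq : ((q.1 : ℤ) - (p.1 : ℤ)) ^ 2 + ((q.2 : ℤ) - (p.2 : ℤ)) ^ 2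
        = ((p.1 : ℤ) - (q.1 : ℤ)) ^ 2 + ((p.2 : ℤ) - (q.2 : ℤ)) ^ 2 := by ring
    rw [heq]; exact h.2
  loopless := by constructor; intro p h; exact h.1 rfl

/- The time-labeling of the temporal graph `(P_n, λ)` with `λ(e) = [T]` for every
edge `e` of the path `P_n`. -/
open Classical in
noncomputable def pathLab (n T : ℕ) : Sym2 (Fin n) → Finset ℕ :=
  fun e => if e ∈ (SimpleGraph.pathGraph n).edgeSet then Finset.Icc 1 T else ∅

/- The 2-temporal line graph of the path `P_n` with every edge active at every time in `[T]` is
the strong product of `L(P_n) ≅ P_{n-1}` with `P_T`: the time edge `(v_i v_{i+1}, t)` sits at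
`(i, t - 1)`, two path edges meet iff their indices differ by at most one, and two labels are
less than 2 apart iff they differ by at most one. The strong product of two paths is the king's
graph, where `a² + b² ≤ 2` says exactly `|a|, |b| ≤ 1`. -/

open SimpleGraph

lemma Int.sq_add_sq_le_two_iff {a b : ℤ} : a ^ 2 + b ^ 2 ≤ 2 ↔ a.natAbs ≤ 1 ∧ b.natAbs ≤ 1 := by
  constructor
  · intro h
    have ha : a ^ 2 ≤ 2 := by nlinarith [sq_nonneg b]
    have hb : b ^ 2 ≤ 2 := by nlinarith [sq_nonneg a]
    constructor
    · have : -1 ≤ a ∧ a ≤ 1 := ⟨by nlinarith, by nlinarith⟩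
      omega
    · have : -1 ≤ b ∧ b ≤ 1 := ⟨by nlinarith, by nlinarith⟩
      omega
  · rintro ⟨ha, hb⟩
    rw [← Int.natAbs_sq a, ← Int.natAbs_sq b]
    have ha' : (a.natAbs : ℤ) ≤ 1 := by exact_mod_cast ha
    have hb' : (b.natAbs : ℤ) ≤ 1 := by exact_mod_cast hb
    nlinarith [Int.natCast_nonneg a.natAbs, Int.natCast_nonneg b.natAbs]

lemma diagGrid_adj_iff {n m : ℕ} {p q : Fin n × Fin m} :
    (diagGrid n m).Adj p q ↔
      p ≠ q ∧ ((p.1 : ℤ) - q.1).natAbs ≤ 1 ∧ ((p.2 : ℤ) - q.2).natAbs ≤ 1 :=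
  and_congr_right' Int.sq_add_sq_le_two_iff

namespace SimpleGraph

variable {n : ℕ}

def pathEdge (i : Fin (n - 1)) : Sym2 (Fin n) :=
  s(⟨i, by omega⟩, ⟨i + 1, by omega⟩)

lemma pathEdge_injective : Function.Injective (pathEdge (n := n)) := by
  intro i j h
  simp only [pathEdge, Sym2.eq_iff, Fin.ext_iff] at h
  omega

lemma mem_edgeSet_pathGraph_iff {e : Sym2 (Fin n)} :
    e ∈ (pathGraph n).edgeSet ↔ ∃ i, pathEdge i = e := by
  induction e with
  | h a b =>
    rw [mem_edgeSet, pathGraph_adj]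
    constructor
    · intro hab
      refine ⟨⟨min a b, by omega⟩, ?_⟩
      simp only [pathEdge, Sym2.eq_iff, Fin.ext_iff]
      omega
    · rintro ⟨i, hi⟩
      simp only [pathEdge, Sym2.eq_iff, Fin.ext_iff] at hi
      omega

lemma exists_mem_pathEdge_iff {i j : Fin (n - 1)} :
    (∃ v, v ∈ pathEdge i ∧ v ∈ pathEdge j) ↔ ((i : ℤ) - j).natAbs ≤ 1 := by
  simp only [pathEdge, Sym2.mem_iff, Fin.ext_iff]
  constructor
  · rintro ⟨v, hi, hj⟩
    omega
  · intro h
    refine ⟨⟨max i j, by omega⟩, ?_, ?_⟩ <;> simp only <;> omega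

end SimpleGraph

section PathLab

variable {n T : ℕ}

lemma isTimeEdge_pathLab_iff {e : Sym2 (Fin n)} {t : ℕ} :
    IsTimeEdge (pathLab n T) (e, t) ↔ e ∈ (pathGraph n).edgeSet ∧ t ∈ Finset.Icc 1 T := by
  classical
  by_cases he : e ∈ (pathGraph n).edgeSet
  · simp [IsTimeEdge, pathLab, he, not_isDiag_of_mem_edgeSet _ he]
  · simp [IsTimeEdge, pathLab, he]

def pathTimeEdge (q : Fin (n - 1) × Fin T) :
    {p : Sym2 (Fin n) × ℕ // IsTimeEdge (pathLab n T) p} :=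
  ⟨(pathEdge q.1, q.2 + 1),
    isTimeEdge_pathLab_iff.2 ⟨mem_edgeSet_pathGraph_iff.2 ⟨q.1, rfl⟩, by simp⟩⟩

lemma pathTimeEdge_bijective : Function.Bijective (pathTimeEdge (n := n) (T := T)) := by
  constructor
  · rintro ⟨i, j⟩ ⟨i', j'⟩ h
    simp only [pathTimeEdge, Subtype.mk.injEq, Prod.mk.injEq] at h
    exact Prod.ext (pathEdge_injective h.1) (Fin.ext (Nat.succ_injective h.2))
  · rintro ⟨⟨e, t⟩, he⟩
    obtain ⟨hedge, ht⟩ := isTimeEdge_pathLab_iff.1 he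
    obtain ⟨i, rfl⟩ := mem_edgeSet_pathGraph_iff.1 hedge
    rw [Finset.mem_Icc] at ht
    exact ⟨(i, ⟨t - 1, by omega⟩), Subtype.ext (Prod.ext rfl (by simp only [pathTimeEdge]; omega))⟩

lemma tline_pathLab_adj_pathTimeEdge_iff {p q : Fin (n - 1) × Fin T} :
    (tline (pathLab n T) 2).Adj (pathTimeEdge p) (pathTimeEdge q) ↔
      (diagGrid (n - 1) T).Adj p q := by
  rw [diagGrid_adj_iff, ← exists_mem_pathEdge_iff, pathTimeEdge_bijective.1.ne_iff.symm]
  refine and_congr_right' (and_congr_right' ?_)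
  simp only [pathTimeEdge]
  push_cast
  omega

end PathLab

theorem stmt8_general (n T : ℕ) :
    Nonempty (tline (pathLab n T) 2 ≃g diagGrid (n - 1) T) :=
  ⟨RelIso.symm
    { toEquiv := Equiv.ofBijective _ pathTimeEdge_bijective
      map_rel_iff' := tline_pathLab_adj_pathTimeEdge_iff }⟩

/-- For `n ≥ 2` and `T ≥ 1`, the 2-temporal line graph of the temporal
graph `(P_n, λ)` with `λ(e) = [T]` for every edge is isomorphic to the diagonal grid
graph `Z^D_{n-1,T}`. -/
theorem stmt8 (n T : ℕ) (hn : 2 ≤ n) (hT : 1 ≤ T) :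
    Nonempty (tline (pathLab n T) 2 ≃g diagGrid (n - 1) T) :=
  stmt8_general n T
end

section
/- Let Δ and T be natural numbers with Δ ≤ T. Then there are exactly 2Δ − 1 distinct Δ-templates with respect to lifetime T. -/
/-- An interval `I = [I.1, I.2] ⊆ [T]` is a Δ-window (length exactly Δ) or a partial
Δ-window (length at most Δ-1, and starting at slot 1 or ending at slot T). -/
def IsWindow (Δ T : ℕ) (I : ℕ × ℕ) : Prop :=
  1 ≤ I.1 ∧ I.1 ≤ I.2 ∧ I.2 ≤ T ∧
  (I.2 + 1 = I.1 + Δ ∨ (I.2 + 1 < I.1 + Δ ∧ (I.1 = 1 ∨ I.2 = T)))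

/-- A family of pairwise disjoint Δ-windows or partial Δ-windows in `[T]` such that
any two consecutive members are at distance exactly `Δ - 1` from each other
(the distance between `[a₁,b₁]` and `[a₂,b₂]` with `b₁ < a₂` being `a₂ - b₁ - 1`). -/
def GoodFamily (Δ T : ℕ) (S : Finset (ℕ × ℕ)) : Prop :=
  (∀ I ∈ S, IsWindow Δ T I) ∧
  (∀ I ∈ S, ∀ J ∈ S, I ≠ J → (I.2 < J.1 ∨ J.2 < I.1)) ∧
  (∀ I ∈ S, ∀ J ∈ S, I.2 < J.1 → (∀ K ∈ S, ¬(I.2 < K.1 ∧ K.2 < J.1)) → J.1 = I.2 + Δ)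

/-- A Δ-template with respect to lifetime `T`: a maximal such family. -/
def IsTemplate (Δ T : ℕ) (S : Finset (ℕ × ℕ)) : Prop :=
  GoodFamily Δ T S ∧ ∀ S' : Finset (ℕ × ℕ), S ⊆ S' → GoodFamily Δ T S' → S' = S

/-- The `m`-th window of the template with offset `k`. -/
def twin (Δ T k m : ℕ) : ℕ × ℕ :=
  (max 1 (k + 1 + m * (2 * Δ - 1) + 1 - Δ), min T (k + 1 + m * (2 * Δ - 1)))

/-- Index of the last window of the template with offset `k`. -/
def tmax (Δ T k : ℕ) : ℕ := (T + Δ - (k + 2)) / (2 * Δ - 1)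

/-- The template with offset `k`. -/
def tmp (Δ T k : ℕ) : Finset (ℕ × ℕ) :=
  (Finset.range (tmax Δ T k + 1)).image (twin Δ T k)

lemma mem_tmp {Δ T k : ℕ} {I : ℕ × ℕ} :
    I ∈ tmp Δ T k ↔ ∃ m, m ≤ tmax Δ T k ∧ twin Δ T k m = I := by
  simp [tmp, Finset.mem_image, Finset.mem_range, Nat.lt_succ_iff]

section

variable {Δ T k : ℕ} (hΔ : 1 ≤ Δ) (hT : Δ ≤ T) (hk : k < 2 * Δ - 1)

include hΔ hT hk

lemma le_tmax_iff (m : ℕ) : m ≤ tmax Δ T k ↔ k + 2 + m * (2 * Δ - 1) ≤ T + Δ := by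
  rw [tmax, Nat.le_div_iff_mul_le (by omega)]
  generalize m * (2 * Δ - 1) = x
  omega

lemma twin_isWindow {m : ℕ} (hm : m ≤ tmax Δ T k) : IsWindow Δ T (twin Δ T k m) := by
  rw [le_tmax_iff hΔ hT hk] at hm
  simp only [IsWindow, twin]
  generalize m * (2 * Δ - 1) = x at hm ⊢
  omega

lemma twin_lt {m m' : ℕ} (h : m < m') : (twin Δ T k m).2 < (twin Δ T k m').1 := by
  have h1 : (m + 1) * (2 * Δ - 1) ≤ m' * (2 * Δ - 1) := Nat.mul_le_mul_right _ h
  rw [add_one_mul] at h1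
  simp only [twin]
  generalize m * (2 * Δ - 1) = x at h1 ⊢
  generalize m' * (2 * Δ - 1) = y at h1 ⊢
  omega

lemma twin_fst_mono {m m' : ℕ} (h : m ≤ m') : (twin Δ T k m).1 ≤ (twin Δ T k m').1 := by
  have h1 : m * (2 * Δ - 1) ≤ m' * (2 * Δ - 1) := Nat.mul_le_mul_right _ h
  simp only [twin]
  generalize m * (2 * Δ - 1) = x at h1 ⊢
  generalize m' * (2 * Δ - 1) = y at h1 ⊢
  omega

lemma twin_snd_mono {m m' : ℕ} (h : m ≤ m') : (twin Δ T k m).2 ≤ (twin Δ T k m').2 := by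
  have h1 : m * (2 * Δ - 1) ≤ m' * (2 * Δ - 1) := Nat.mul_le_mul_right _ h
  simp only [twin]
  generalize m * (2 * Δ - 1) = x at h1 ⊢
  generalize m' * (2 * Δ - 1) = y at h1 ⊢
  omega

lemma twin_succ {m : ℕ} (hm : m + 1 ≤ tmax Δ T k) :
    (twin Δ T k (m + 1)).1 = (twin Δ T k m).2 + Δ := by
  rw [le_tmax_iff hΔ hT hk] at hm
  have h1 : (m + 1) * (2 * Δ - 1) = m * (2 * Δ - 1) + (2 * Δ - 1) := by ring
  simp only [twin]
  rw [h1] at hm ⊢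
  generalize m * (2 * Δ - 1) = x at hm ⊢
  omega

lemma tmp_good : GoodFamily Δ T (tmp Δ T k) := by
  refine ⟨?_, ?_, ?_⟩
  · intro I hI
    obtain ⟨m, hm, rfl⟩ := mem_tmp.1 hI
    exact twin_isWindow hΔ hT hk hm
  · intro I hI J hJ hne
    obtain ⟨m, hm, rfl⟩ := mem_tmp.1 hI
    obtain ⟨m', hm', rfl⟩ := mem_tmp.1 hJ
    rcases lt_trichotomy m m' with h | h | h
    · exact Or.inl (twin_lt hΔ hT hk h)
    · exact absurd (by rw [h]) hne
    · exact Or.inr (twin_lt hΔ hT hk h)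
  · intro I hI J hJ hIJ hK
    obtain ⟨m, hm, rfl⟩ := mem_tmp.1 hI
    obtain ⟨m', hm', rfl⟩ := mem_tmp.1 hJ
    have hle : (twin Δ T k m).1 ≤ (twin Δ T k m).2 := (twin_isWindow hΔ hT hk hm).2.1
    have hmm : m < m' := by
      rcases lt_trichotomy m m' with h | h | h
      · exact h
      · subst h; omega
      · have := twin_lt hΔ hT hk h
        have hle' : (twin Δ T k m').1 ≤ (twin Δ T k m').2 := (twin_isWindow hΔ hT hk hm').2.1
        omega
    have hm1 : m + 1 ≤ tmax Δ T k := by omega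
    rcases Nat.lt_or_ge (m + 1) m' with h | h
    · exact absurd ⟨twin_lt hΔ hT hk (Nat.lt_succ_self m), twin_lt hΔ hT hk h⟩
        (hK _ (mem_tmp.2 ⟨m + 1, hm1, rfl⟩))
    · have : m' = m + 1 := by omega
      subst this
      exact twin_succ hΔ hT hk hm'

lemma tmp_maximal (S' : Finset (ℕ × ℕ)) (hsub : tmp Δ T k ⊆ S') (hS' : GoodFamily Δ T S') :
    S' = tmp Δ T k := by
  classical
  by_contra hne
  have hB : (S' \ tmp Δ T k).Nonempty := by
    rw [Finset.sdiff_nonempty]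
    intro h
    exact hne (Finset.Subset.antisymm h hsub)
  obtain ⟨I, hI, hImax⟩ := Finset.exists_max_image (S' \ tmp Δ T k) Prod.snd hB
  obtain ⟨hIS', hIt⟩ := Finset.mem_sdiff.1 hI
  have hIw : IsWindow Δ T I := hS'.1 I hIS'
  simp only [IsWindow] at hIw
  obtain ⟨hIw1, hIw2, hIw3, -⟩ := hIw
  by_cases hcase : ∃ m, m ≤ tmax Δ T k ∧ I.2 < (twin Δ T k m).1
  · -- case (a)
    obtain ⟨m, ⟨hm, hm2⟩, hmin⟩ :
        ∃ m, (m ≤ tmax Δ T k ∧ I.2 < (twin Δ T k m).1) ∧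
          ∀ m' < m, ¬(m' ≤ tmax Δ T k ∧ I.2 < (twin Δ T k m').1) :=
      ⟨Nat.find hcase, Nat.find_spec hcase, fun m' h => Nat.find_min hcase h⟩
    have hwm : twin Δ T k m ∈ S' := hsub (mem_tmp.2 ⟨m, hm, rfl⟩)
    have hgap := hS'.2.2 I hIS' (twin Δ T k m) hwm hm2 ?_
    · -- contradiction from the gap equation
      cases m with
      | zero =>
        have : (twin Δ T k 0).1 ≤ Δ := by
          simp only [twin, Nat.zero_mul]
          omega
        omega
      | succ n =>
        have hn : n ≤ tmax Δ T k := by omega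
        have hwn : twin Δ T k n ∈ S' := hsub (mem_tmp.2 ⟨n, hn, rfl⟩)
        have hneI : I ≠ twin Δ T k n := by
          intro h; exact hIt (h ▸ mem_tmp.2 ⟨n, hn, rfl⟩)
        have hdisj := hS'.2.1 I hIS' (twin Δ T k n) hwn hneI
        have hnot : ¬ I.2 < (twin Δ T k n).1 := by
          intro h
          exact (hmin n (Nat.lt_succ_self n)) ⟨hn, h⟩
        have hsucc := twin_succ hΔ hT hk hm
        have hle : (twin Δ T k n).1 ≤ (twin Δ T k n).2 := (twin_isWindow hΔ hT hk hn).2.1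
        omega
    · -- no window strictly between I and twin m
      rintro K hKS' ⟨hK1, hK2⟩
      by_cases hKt : K ∈ tmp Δ T k
      · obtain ⟨m'', hm'', rfl⟩ := mem_tmp.1 hKt
        rcases Nat.lt_or_ge m'' m with h | h
        · exact (hmin m'' h) ⟨hm'', hK1⟩
        · have h1 := twin_fst_mono hΔ hT hk h (m := m) (m' := m'')
          have h2 : (twin Δ T k m'').1 ≤ (twin Δ T k m'').2 := (twin_isWindow hΔ hT hk hm'').2.1
          omega
      · have hKB : K ∈ S' \ tmp Δ T k := Finset.mem_sdiff.2 ⟨hKS', hKt⟩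
        have := hImax K hKB
        have hKw : IsWindow Δ T K := hS'.1 K hKS'
        obtain ⟨_, h2, _⟩ := hKw
        omega
  · -- case (b): I is beyond the last window
    push_neg at hcase
    have haM : (twin Δ T k (tmax Δ T k)).1 ≤ I.2 := hcase _ le_rfl
    have hwM : twin Δ T k (tmax Δ T k) ∈ S' := hsub (mem_tmp.2 ⟨_, le_rfl, rfl⟩)
    have hneI : I ≠ twin Δ T k (tmax Δ T k) := fun h => hIt (h ▸ mem_tmp.2 ⟨_, le_rfl, rfl⟩)
    have hdisj := hS'.2.1 I hIS' (twin Δ T k (tmax Δ T k)) hwM hneI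
    have hbM : (twin Δ T k (tmax Δ T k)).2 < I.1 := by
      have hle : (twin Δ T k (tmax Δ T k)).1 ≤ (twin Δ T k (tmax Δ T k)).2 :=
        (twin_isWindow hΔ hT hk le_rfl).2.1
      omega
    have hB' : ((S' \ tmp Δ T k).filter (fun J => (twin Δ T k (tmax Δ T k)).2 < J.1)).Nonempty :=
      ⟨I, Finset.mem_filter.2 ⟨hI, hbM⟩⟩
    obtain ⟨J, hJ, hJmin⟩ := Finset.exists_min_image _ Prod.fst hB'
    obtain ⟨hJB, hJ1⟩ := Finset.mem_filter.1 hJ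
    obtain ⟨hJS', hJt⟩ := Finset.mem_sdiff.1 hJB
    have hJw : IsWindow Δ T J := hS'.1 J hJS'
    have hgap := hS'.2.2 (twin Δ T k (tmax Δ T k)) hwM J hJS' hJ1 ?_
    · -- contradiction: J.1 = bM + Δ > T
      have hlast : ¬ (tmax Δ T k + 1 ≤ tmax Δ T k) := by omega
      rw [le_tmax_iff hΔ hT hk] at hlast
      have h1 : (tmax Δ T k + 1) * (2 * Δ - 1) = tmax Δ T k * (2 * Δ - 1) + (2 * Δ - 1) := by ring
      rw [h1] at hlast
      have hbMv : (twin Δ T k (tmax Δ T k)).2 = min T (k + 1 + tmax Δ T k * (2 * Δ - 1)) := rfl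
      generalize tmax Δ T k * (2 * Δ - 1) = x at hlast hbMv
      obtain ⟨_, h2, h3, _⟩ := hJw
      omega
    · rintro K hKS' ⟨hK1, hK2⟩
      by_cases hKt : K ∈ tmp Δ T k
      · obtain ⟨m'', hm'', rfl⟩ := mem_tmp.1 hKt
        have h1 := twin_snd_mono hΔ hT hk hm'' (m' := tmax Δ T k)
        have h2 : (twin Δ T k m'').1 ≤ (twin Δ T k m'').2 := (twin_isWindow hΔ hT hk hm'').2.1
        omega
      · have hKB : K ∈ (S' \ tmp Δ T k).filter (fun J => (twin Δ T k (tmax Δ T k)).2 < J.1) :=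
          Finset.mem_filter.2 ⟨Finset.mem_sdiff.2 ⟨hKS', hKt⟩, hK1⟩
        have := hJmin K hKB
        have hKw : IsWindow Δ T K := hS'.1 K hKS'
        obtain ⟨_, h2, _⟩ := hKw
        omega

lemma tmp_isTemplate : IsTemplate Δ T (tmp Δ T k) :=
  ⟨tmp_good hΔ hT hk, tmp_maximal hΔ hT hk⟩

end

section

variable {Δ T : ℕ} (hΔ : 1 ≤ Δ) (hT : Δ ≤ T)

include hΔ hT

lemma twin_next {k m : ℕ} (hk : k < 2 * Δ - 1) (hm : m ≤ tmax Δ T k) {I : ℕ × ℕ}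
    (hw : IsWindow Δ T I) (h : I.1 = (twin Δ T k m).2 + Δ) :
    m + 1 ≤ tmax Δ T k ∧ twin Δ T k (m + 1) = I := by
  simp only [IsWindow] at hw
  rw [le_tmax_iff hΔ hT hk] at hm ⊢
  have h1 : (m + 1) * (2 * Δ - 1) = m * (2 * Δ - 1) + (2 * Δ - 1) := by ring
  simp only [twin, Prod.ext_iff] at h ⊢
  rw [h1]
  generalize m * (2 * Δ - 1) = x at *
  omega

lemma base1 {I : ℕ × ℕ} (hw : IsWindow Δ T I) (h1 : I.1 = 1) :
    I.2 - 1 < 2 * Δ - 1 ∧ twin Δ T (I.2 - 1) 0 = I := by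
  simp only [IsWindow] at hw
  simp only [twin, Nat.zero_mul, Prod.ext_iff]
  omega

lemma base2 {I : ℕ × ℕ} (hw : IsWindow Δ T I) (h1 : 2 ≤ I.1) :
    (I.1 + Δ - 2) % (2 * Δ - 1) < 2 * Δ - 1 ∧
    (I.1 + Δ - 2) / (2 * Δ - 1) ≤ tmax Δ T ((I.1 + Δ - 2) % (2 * Δ - 1)) ∧
    twin Δ T ((I.1 + Δ - 2) % (2 * Δ - 1)) ((I.1 + Δ - 2) / (2 * Δ - 1)) = I := by
  have hP : 0 < 2 * Δ - 1 := by omega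
  have hkP : (I.1 + Δ - 2) % (2 * Δ - 1) < 2 * Δ - 1 := Nat.mod_lt _ hP
  refine ⟨hkP, ?_, ?_⟩
  · rw [le_tmax_iff hΔ hT hkP]
    have hdm : (I.1 + Δ - 2) % (2 * Δ - 1) + ((I.1 + Δ - 2) / (2 * Δ - 1)) * (2 * Δ - 1) =
        I.1 + Δ - 2 := by
      rw [Nat.mul_comm ((I.1 + Δ - 2) / (2 * Δ - 1)) (2 * Δ - 1)]
      exact Nat.mod_add_div _ _
    simp only [IsWindow] at hw
    generalize ((I.1 + Δ - 2) / (2 * Δ - 1)) * (2 * Δ - 1) = x at *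
    omega
  · have hdm : (I.1 + Δ - 2) % (2 * Δ - 1) + ((I.1 + Δ - 2) / (2 * Δ - 1)) * (2 * Δ - 1) =
        I.1 + Δ - 2 := by
      rw [Nat.mul_comm ((I.1 + Δ - 2) / (2 * Δ - 1)) (2 * Δ - 1)]
      exact Nat.mod_add_div _ _
    simp only [IsWindow] at hw
    simp only [twin, Prod.ext_iff]
    generalize ((I.1 + Δ - 2) / (2 * Δ - 1)) * (2 * Δ - 1) = x at *
    omega

lemma exists_offset {S : Finset (ℕ × ℕ)} (hS : IsTemplate Δ T S) :
    ∃ k < 2 * Δ - 1, S = tmp Δ T k := by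
  classical
  obtain ⟨hgood, hmaxS⟩ := hS
  have h0 : (0 : ℕ) < 2 * Δ - 1 := by omega
  have hSne : S.Nonempty := by
    by_contra h
    rw [Finset.not_nonempty_iff_eq_empty] at h
    subst h
    have heq := hmaxS (tmp Δ T 0) (Finset.empty_subset _) (tmp_good hΔ hT h0)
    have hmem : twin Δ T 0 0 ∈ tmp Δ T 0 := mem_tmp.2 ⟨0, Nat.zero_le _, rfl⟩
    rw [heq] at hmem
    simp at hmem
  obtain ⟨I₀, hI₀S, hI₀min⟩ := Finset.exists_min_image S Prod.fst hSne
  have hI₀w := hgood.1 I₀ hI₀S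
  obtain ⟨k, hk, m₀, hm₀, h₀eq⟩ :
      ∃ k, k < 2 * Δ - 1 ∧ ∃ m₀, m₀ ≤ tmax Δ T k ∧ twin Δ T k m₀ = I₀ := by
    by_cases hstart : I₀.1 = 1
    · obtain ⟨hk1, hk2⟩ := base1 hΔ hT hI₀w hstart
      refine ⟨I₀.2 - 1, hk1, 0, Nat.zero_le _, hk2⟩
    · have h2 : 2 ≤ I₀.1 := by
        have := hI₀w.1; omega
      obtain ⟨hk1, hk2, hk3⟩ := base2 hΔ hT hI₀w h2
      exact ⟨_, hk1, _, hk2, hk3⟩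
  have hsub : S ⊆ tmp Δ T k := by
    have main : ∀ n, ∀ I ∈ S, I.1 ≤ n → I ∈ tmp Δ T k := by
      intro n
      induction n with
      | zero =>
        intro I hIS hn
        have := (hgood.1 I hIS).1
        omega
      | succ n ih =>
        intro I hIS hn
        by_cases hpred : ∃ J ∈ S, J.2 < I.1
        · obtain ⟨J₀, hJ₀⟩ := hpred
          have hF : (S.filter (fun J => J.2 < I.1)).Nonempty :=
            ⟨J₀, Finset.mem_filter.2 ⟨hJ₀.1, hJ₀.2⟩⟩
          obtain ⟨J, hJ, hJmax⟩ := Finset.exists_max_image _ Prod.snd hF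
          obtain ⟨hJS, hJlt⟩ := Finset.mem_filter.1 hJ
          have hgap := hgood.2.2 J hJS I hIS hJlt ?_
          · have hJtmp : J ∈ tmp Δ T k := by
              refine ih J hJS ?_
              have := (hgood.1 J hJS).2.1
              omega
            obtain ⟨m, hm, hmeq⟩ := mem_tmp.1 hJtmp
            have hnext := twin_next hΔ hT hk hm (hgood.1 I hIS) (by rw [hmeq]; omega)
            exact mem_tmp.2 ⟨m + 1, hnext.1, hnext.2⟩
          · rintro K hKS ⟨hK1, hK2⟩
            have hKF : K ∈ S.filter (fun J => J.2 < I.1) := Finset.mem_filter.2 ⟨hKS, hK2⟩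
            have := hJmax K hKF
            have := (hgood.1 K hKS).2.1
            omega
        · push_neg at hpred
          have : I = I₀ := by
            by_contra hne
            rcases hgood.2.1 I hIS I₀ hI₀S hne with h | h
            · have h1 := hI₀min I hIS
              have h2 := (hgood.1 I hIS).2.1
              omega
            · exact absurd h (by simpa using hpred I₀ hI₀S)
          subst this
          exact mem_tmp.2 ⟨m₀, hm₀, h₀eq⟩
    intro I hIS
    exact main I.1 I hIS le_rfl
  exact ⟨k, hk, (hmaxS (tmp Δ T k) hsub (tmp_good hΔ hT hk)).symm⟩

lemma tmp_inj {k k' : ℕ} (hk : k < 2 * Δ - 1) (hk' : k' < 2 * Δ - 1)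
    (h : tmp Δ T k = tmp Δ T k') : k = k' := by
  have h0 : twin Δ T k 0 ∈ tmp Δ T k' := h ▸ mem_tmp.2 ⟨0, Nat.zero_le _, rfl⟩
  obtain ⟨m, hm, heq⟩ := mem_tmp.1 h0
  have hm0 : m = 0 := by
    by_contra hm0
    have h1 : 1 ≤ m := by omega
    have h2 : 1 * (2 * Δ - 1) ≤ m * (2 * Δ - 1) := Nat.mul_le_mul_right _ h1
    rw [one_mul] at h2
    have h3 := congrArg Prod.fst heq
    simp only [twin, Nat.zero_mul] at h3
    generalize m * (2 * Δ - 1) = x at *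
    omega
  subst hm0
  have h1 := congrArg Prod.fst heq
  have h2 := congrArg Prod.snd heq
  simp only [twin, Nat.zero_mul] at h1 h2
  omega

end

/-- For natural numbers `1 ≤ Δ ≤ T` there are exactly `2Δ - 1` distinct
Δ-templates with respect to lifetime `T`. -/
theorem stmt10 (Δ T : ℕ) (hΔ : 1 ≤ Δ) (hT : Δ ≤ T) :
    {S : Finset (ℕ × ℕ) | IsTemplate Δ T S}.ncard = 2 * Δ - 1 := by
  classical
  have hset : {S : Finset (ℕ × ℕ) | IsTemplate Δ T S} =
      ↑((Finset.range (2 * Δ - 1)).image (tmp Δ T)) := by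
    ext S
    simp only [Set.mem_setOf_eq, Finset.coe_image, Set.mem_image, Finset.mem_coe,
      Finset.mem_range]
    constructor
    · intro h
      obtain ⟨k, hk, heq⟩ := exists_offset hΔ hT h
      exact ⟨k, hk, heq.symm⟩
    · rintro ⟨k, hk, rfl⟩
      exact tmp_isTemplate hΔ hT hk
  rw [hset, Set.ncard_coe_finset, Finset.card_image_of_injOn, Finset.card_range]
  intro a ha b hb hab
  exact tmp_inj hΔ hT (Finset.mem_range.1 (Finset.mem_coe.1 ha))
    (Finset.mem_range.1 (Finset.mem_coe.1 hb)) hab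
end

section
/- Let Δ and T be natural numbers with Δ ≤ T. Then every time slot in [T] is covered by exactly Δ of the 2Δ − 1 distinct Δ-templates with respect to lifetime T, where a time slot is covered by a Δ-template 𝒮 if it belongs to some interval of 𝒮. -/
namespace Stmt11

/-- The chain of intervals starting from `(a,b)`, each next one starting `Δ` after
the previous end, of length `Δ` clipped at `T`. -/
def chain (Δ T a b : ℕ) : ℕ → ℕ × ℕ
  | 0 => (a, b)
  | k+1 => ((chain Δ T a b k).2 + Δ, min T ((chain Δ T a b k).2 + (2*Δ - 1)))

/-- The family of all chain members that begin no later than `T`. -/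
def chainSet (Δ T a b : ℕ) : Finset (ℕ × ℕ) :=
  ((Finset.range (T+1)).filter (fun k => (chain Δ T a b k).1 ≤ T)).image (chain Δ T a b)

section Chain

variable {Δ T a b : ℕ}

lemma chain_snd (hb : b ≤ T) : ∀ k, (chain Δ T a b k).2 = min T (b + k*(2*Δ-1))
  | 0 => by simp [chain]; omega
  | k+1 => by
    have ih := chain_snd hb k
    have h : (k+1)*(2*Δ-1) = k*(2*Δ-1) + (2*Δ-1) := by ring
    simp only [chain, ih, h]
    generalize k*(2*Δ-1) = q
    omega

lemma chain_fst_zero : (chain Δ T a b 0).1 = a := rfl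

lemma chain_snd_zero : (chain Δ T a b 0).2 = b := rfl

lemma chain_fst_succ (hb : b ≤ T) (k : ℕ) :
    (chain Δ T a b (k+1)).1 = min T (b + k*(2*Δ-1)) + Δ := by
  simp only [chain, chain_snd hb k]

lemma chain_index_lt (hΔ : 1 ≤ Δ) (ha : 1 ≤ a) (hab : a ≤ b) (hb : b ≤ T)
    {k : ℕ} (hk : (chain Δ T a b k).1 ≤ T) : k < T + 1 := by
  cases k with
  | zero => omega
  | succ j =>
    rw [chain_fst_succ hb j] at hk
    have h1 : j ≤ j * (2*Δ-1) := by
      calc j = j * 1 := (mul_one j).symm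
      _ ≤ j * (2*Δ-1) := Nat.mul_le_mul_left j (by omega)
    generalize j*(2*Δ-1) = q at *
    omega

lemma mem_chainSet (hΔ : 1 ≤ Δ) (ha : 1 ≤ a) (hab : a ≤ b) (hb : b ≤ T) {I : ℕ × ℕ} :
    I ∈ chainSet Δ T a b ↔ ∃ k, (chain Δ T a b k).1 ≤ T ∧ I = chain Δ T a b k := by
  simp only [chainSet, Finset.mem_image, Finset.mem_filter, Finset.mem_range]
  constructor
  · rintro ⟨k, ⟨-, hk⟩, rfl⟩; exact ⟨k, hk, rfl⟩
  · rintro ⟨k, hk, rfl⟩; exact ⟨k, ⟨chain_index_lt hΔ ha hab hb hk, hk⟩, rfl⟩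

end Chain

section Good

variable {Δ T a b : ℕ}

/-- Validity of the initial interval. -/
def Valid (Δ T a b : ℕ) : Prop := IsWindow Δ T (a, b) ∧ a ≤ Δ

lemma Valid.ha (h : Valid Δ T a b) : 1 ≤ a := h.1.1
lemma Valid.hab (h : Valid Δ T a b) : a ≤ b := h.1.2.1
lemma Valid.hb (h : Valid Δ T a b) : b ≤ T := h.1.2.2.1
lemma Valid.hlen (h : Valid Δ T a b) : b + 1 ≤ a + Δ := by
  rcases h.1.2.2.2 with h' | h' <;> omega

/-- Each member of the chain that starts by time `T` is a window. -/
lemma chain_isWindow (hΔ : 1 ≤ Δ) (hT : Δ ≤ T) (hv : Valid Δ T a b)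
    {k : ℕ} (hk : (chain Δ T a b k).1 ≤ T) : IsWindow Δ T (chain Δ T a b k) := by
  cases k with
  | zero => exact hv.1
  | succ j =>
    have h1 := chain_fst_succ (Δ := Δ) (a := a) hv.hb j
    have h2 := chain_snd (Δ := Δ) (a := a) hv.hb (j+1)
    have h3 : (j+1)*(2*Δ-1) = j*(2*Δ-1) + (2*Δ-1) := by ring
    rw [h3] at h2
    rw [h1] at hk
    unfold IsWindow
    rw [h1, h2]
    generalize j*(2*Δ-1) = q at *
    omega

lemma chain_fst_le_snd (hΔ : 1 ≤ Δ) (hT : Δ ≤ T) (hv : Valid Δ T a b)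
    {k : ℕ} (hk : (chain Δ T a b k).1 ≤ T) :
    (chain Δ T a b k).1 ≤ (chain Δ T a b k).2 :=
  (chain_isWindow hΔ hT hv hk).2.1

/-- Strict ordering of chain members. -/
lemma chain_lt (hΔ : 1 ≤ Δ) (hv : Valid Δ T a b) {k l : ℕ} (hkl : k < l)
    (hl : (chain Δ T a b l).1 ≤ T) :
    (chain Δ T a b k).2 < (chain Δ T a b l).1 := by
  obtain ⟨j, rfl⟩ : ∃ j, l = j + 1 := ⟨l - 1, by omega⟩
  rw [chain_fst_succ hv.hb j] at *
  rw [chain_snd hv.hb k]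
  have h1 : k * (2*Δ-1) ≤ j * (2*Δ-1) := Nat.mul_le_mul_right _ (by omega)
  generalize k*(2*Δ-1) = q at *
  generalize j*(2*Δ-1) = r at *
  omega

lemma chainSet_good (hΔ : 1 ≤ Δ) (hT : Δ ≤ T) (hv : Valid Δ T a b) :
    GoodFamily Δ T (chainSet Δ T a b) := by
  have hmem : ∀ {I : ℕ × ℕ}, I ∈ chainSet Δ T a b ↔
      ∃ k, (chain Δ T a b k).1 ≤ T ∧ I = chain Δ T a b k :=
    mem_chainSet hΔ hv.ha hv.hab hv.hb
  refine ⟨?_, ?_, ?_⟩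
  · rintro I hI
    obtain ⟨k, hk, rfl⟩ := hmem.1 hI
    exact chain_isWindow hΔ hT hv hk
  · rintro I hI J hJ hne
    obtain ⟨k, hk, rfl⟩ := hmem.1 hI
    obtain ⟨l, hl, rfl⟩ := hmem.1 hJ
    rcases Nat.lt_trichotomy k l with h | h | h
    · exact Or.inl (chain_lt hΔ hv h hl)
    · exact absurd (by rw [h]) hne
    · exact Or.inr (chain_lt hΔ hv h hk)
  · rintro I hI J hJ hIJ hbetween
    obtain ⟨k, hk, rfl⟩ := hmem.1 hI
    obtain ⟨l, hl, rfl⟩ := hmem.1 hJ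
    have hkl : k < l := by
      rcases Nat.lt_trichotomy k l with h | h | h
      · exact h
      · subst h
        exact absurd hIJ (by have := chain_fst_le_snd hΔ hT hv hk; omega)
      · have := chain_lt hΔ hv h hk
        have := chain_fst_le_snd hΔ hT hv hk
        have := chain_fst_le_snd hΔ hT hv hl
        omega
    rcases Nat.lt_or_ge (k+1) l with h | h
    · -- chain (k+1) is strictly between, contradiction
      exfalso
      have hincl : (chain Δ T a b (k+1)).1 ≤ T := by
        have h1 := chain_lt hΔ hv h hl
        have h2 := chain_fst_le_snd hΔ hT hv hl
        have h3 : (chain Δ T a b (k+1)).1 ≤ (chain Δ T a b (k+1)).2 ∨ True := Or.inr trivial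
        -- (chain (k+1)).1 ≤ (chain (k+1)).2 < (chain l).1 ≤ T ... need fst ≤ snd w/o incl
        -- instead: (chain (k+1)).2 < (chain l).1 ≤ T and fst ≤ snd + Δ ...
        -- use: fst (k+1) = snd k + Δ ≤ snd (k+1)? avoid; direct:
        have h4 : (chain Δ T a b (k+1)).1 ≤ (chain Δ T a b l).1 := by
          obtain ⟨j, rfl⟩ : ∃ j, l = j + 1 := ⟨l - 1, by omega⟩
          rw [chain_fst_succ hv.hb, chain_fst_succ hv.hb]
          have : k * (2*Δ-1) ≤ j * (2*Δ-1) := Nat.mul_le_mul_right _ (by omega)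
          generalize k*(2*Δ-1) = q at *
          generalize j*(2*Δ-1) = r at *
          omega
        omega
      exact hbetween _ (hmem.2 ⟨k+1, hincl, rfl⟩)
        ⟨chain_lt hΔ hv (Nat.lt_succ_self k) hincl, chain_lt hΔ hv h hl⟩
    · have hl1 : l = k + 1 := by omega
      subst hl1
      rfl

end Good

section Structure

variable {Δ T a b : ℕ}

/-- In a good family containing a valid `(a,b)`, every interval starts at `a` or later. -/
lemma min_start (hΔ : 1 ≤ Δ) {S' : Finset (ℕ × ℕ)} (hG : GoodFamily Δ T S')
    (habS : (a, b) ∈ S') (hv : Valid Δ T a b) : ∀ I ∈ S', a ≤ I.1 := by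
  by_contra hcon
  push_neg at hcon
  obtain ⟨I, hI, hlt⟩ := hcon
  obtain ⟨hwI1, hwI2, hwI3, hwI4⟩ := hG.1 I hI
  have hI2 : I.2 < a := by
    have hne : I ≠ (a, b) := by
      intro h; rw [h] at hlt; simp at hlt
    rcases hG.2.1 I hI _ habS hne with h | h
    · exact h
    · have := hv.hab; simp only at h; omega
  obtain ⟨J, hJP, hJmax⟩ := Finset.exists_max_image (S'.filter (fun K => K.2 < a))
    (fun K => K.2) ⟨I, Finset.mem_filter.2 ⟨hI, hI2⟩⟩
  have hJ : J ∈ S' := (Finset.mem_filter.1 hJP).1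
  have hJ2 : J.2 < a := (Finset.mem_filter.1 hJP).2
  obtain ⟨hwJ1, hwJ2, hwJ3, hwJ4⟩ := hG.1 J hJ
  have hgap : a = J.2 + Δ := by
    apply hG.2.2 J hJ (a, b) habS hJ2
    rintro K hK ⟨h1, h2⟩
    have hle := hJmax K (Finset.mem_filter.2 ⟨hK, h2⟩)
    obtain ⟨hwK1, hwK2, hwK3, hwK4⟩ := hG.1 K hK
    omega
  have := hv.2
  omega

/-- Any good family containing `(a,b)` as its left-most member, with `(a,b)` valid,
is contained in the chain family generated by `(a,b)`. -/
lemma subset_chainSet (hΔ : 1 ≤ Δ) (hT : Δ ≤ T) (hv : Valid Δ T a b)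
    {S' : Finset (ℕ × ℕ)} (hG : GoodFamily Δ T S') (habS : (a, b) ∈ S')
    (hmin : ∀ I ∈ S', a ≤ I.1) : S' ⊆ chainSet Δ T a b := by
  have hmc : ∀ {I : ℕ × ℕ}, I ∈ chainSet Δ T a b ↔
      ∃ k, (chain Δ T a b k).1 ≤ T ∧ I = chain Δ T a b k :=
    mem_chainSet hΔ hv.ha hv.hab hv.hb
  suffices H : ∀ n, ∀ I ∈ S', I.1 = n → I ∈ chainSet Δ T a b by
    intro I hI; exact H I.1 I hI rfl
  intro n
  induction n using Nat.strong_induction_on with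
  | _ n ih =>
    intro I hI hn
    obtain ⟨hwI1, hwI2, hwI3, hwI4⟩ := hG.1 I hI
    by_cases hIa : I.1 = a
    · have hIeq : I = (a, b) := by
        by_contra hne
        rcases hG.2.1 I hI _ habS hne with h | h
        · simp only at h; omega
        · have := hv.hab; simp only at h; omega
      rw [hIeq]
      refine hmc.2 ⟨0, ?_, rfl⟩
      show a ≤ T
      have := hv.hab; have := hv.hb; omega
    · have hlt : a < I.1 := lt_of_le_of_ne (hmin I hI) (fun h => hIa h.symm)
      have hbI : b < I.1 := by
        have hne : I ≠ (a, b) := fun h => hIa (by rw [h])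
        rcases hG.2.1 I hI _ habS hne with h | h
        · simp only at h; omega
        · exact h
      obtain ⟨J, hJP, hJmax⟩ := Finset.exists_max_image (S'.filter (fun K => K.2 < I.1))
        (fun K => K.2) ⟨(a, b), Finset.mem_filter.2 ⟨habS, hbI⟩⟩
      have hJ : J ∈ S' := (Finset.mem_filter.1 hJP).1
      have hJ2 : J.2 < I.1 := (Finset.mem_filter.1 hJP).2
      obtain ⟨hwJ1, hwJ2, hwJ3, hwJ4⟩ := hG.1 J hJ
      have hgap : I.1 = J.2 + Δ := by
        apply hG.2.2 J hJ I hI hJ2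
        rintro K hK ⟨h1, h2⟩
        have hle := hJmax K (Finset.mem_filter.2 ⟨hK, h2⟩)
        obtain ⟨hwK1, hwK2, hwK3, hwK4⟩ := hG.1 K hK
        omega
      obtain ⟨k, hk, hJk⟩ := hmc.1 (ih J.1 (by omega) J hJ rfl)
      have hchain : chain Δ T a b (k+1) = (J.2 + Δ, min T (J.2 + (2*Δ-1))) := by
        simp [chain, ← hJk]
      have hIk : I = chain Δ T a b (k+1) := by
        rw [hchain]
        have h2 : I.2 = min T (J.2 + (2*Δ-1)) := by
          rcases hwI4 with h | h <;> omega
        exact Prod.ext (by omega) h2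
      rw [hIk]
      exact hmc.2 ⟨k+1, by rw [← hIk]; omega, rfl⟩

end Structure

section Maximal

variable {Δ T a b : ℕ}

lemma chain_fst_mono (hv : Valid Δ T a b) (k : ℕ) :
    (chain Δ T a b k).1 ≤ (chain Δ T a b (k+1)).1 := by
  cases k with
  | zero =>
    show a ≤ b + Δ
    have := hv.hab; omega
  | succ j =>
    rw [chain_fst_succ hv.hb j, chain_fst_succ hv.hb (j+1)]
    have h1 : j * (2*Δ-1) ≤ (j+1) * (2*Δ-1) := Nat.mul_le_mul_right _ (by omega)
    generalize j*(2*Δ-1) = q at *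
    generalize (j+1)*(2*Δ-1) = r at *
    omega

/-- A template containing `(a,b)` contains the whole chain generated by `(a,b)`. -/
lemma chainSet_subset_template (hΔ : 1 ≤ Δ) (hT : Δ ≤ T) (hv : Valid Δ T a b)
    {S : Finset (ℕ × ℕ)} (hS : IsTemplate Δ T S) (habS : (a, b) ∈ S) :
    chainSet Δ T a b ⊆ S := by
  have hG := hS.1
  have key : ∀ k, (chain Δ T a b k).1 ≤ T → chain Δ T a b k ∈ S := by
    intro k
    induction k with
    | zero => intro _; exact habS
    | succ k ih =>
      intro hincl
      have hk : (chain Δ T a b k).1 ≤ T := le_trans (chain_fst_mono hv k) hincl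
      have hkS := ih hk
      obtain ⟨hw1, hw2, hw3, hw4⟩ := hG.1 _ hkS
      have hchain : chain Δ T a b (k+1) =
          ((chain Δ T a b k).2 + Δ, min T ((chain Δ T a b k).2 + (2*Δ-1))) := rfl
      have hfst : (chain Δ T a b (k+1)).1 = (chain Δ T a b k).2 + Δ := rfl
      have heΔ : (chain Δ T a b k).2 + Δ ≤ T := by omega
      by_cases hex : ∃ J ∈ S, (chain Δ T a b k).2 < J.1
      · obtain ⟨J0, hJ0, hJ0lt⟩ := hex
        obtain ⟨J, hJP, hJmin⟩ := Finset.exists_min_image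
          (S.filter fun J => (chain Δ T a b k).2 < J.1) (fun K => K.1)
          ⟨J0, Finset.mem_filter.2 ⟨hJ0, hJ0lt⟩⟩
        have hJ : J ∈ S := (Finset.mem_filter.1 hJP).1
        have hJe : (chain Δ T a b k).2 < J.1 := (Finset.mem_filter.1 hJP).2
        obtain ⟨hwJ1, hwJ2, hwJ3, hwJ4⟩ := hG.1 J hJ
        have hgap : J.1 = (chain Δ T a b k).2 + Δ := by
          apply hG.2.2 _ hkS J hJ hJe
          rintro K hK ⟨h1, h2⟩
          have hle := hJmin K (Finset.mem_filter.2 ⟨hK, h1⟩)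
          obtain ⟨hwK1, hwK2, hwK3, hwK4⟩ := hG.1 K hK
          omega
        have hJeq : J = chain Δ T a b (k+1) := by
          rw [hchain]
          refine Prod.ext (by omega) ?_
          rcases hwJ4 with h | h <;> omega
        rw [← hJeq]; exact hJ
      · push_neg at hex
        have hgood : GoodFamily Δ T (insert (chain Δ T a b (k+1)) S) := by
          refine ⟨?_, ?_, ?_⟩
          · intro I hI
            rcases Finset.mem_insert.1 hI with rfl | hI
            · rw [hchain]; unfold IsWindow; simp only; omega
            · exact hG.1 I hI
          · intro I hI J hJ hne
            rcases Finset.mem_insert.1 hI with rfl | hI <;>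
              rcases Finset.mem_insert.1 hJ with rfl | hJ
            · exact absurd rfl hne
            · right
              obtain ⟨hq1, hq2, hq3, hq4⟩ := hG.1 J hJ
              have := hex J hJ
              rw [hchain]; simp only; omega
            · left
              obtain ⟨hq1, hq2, hq3, hq4⟩ := hG.1 I hI
              have := hex I hI
              rw [hchain]; simp only; omega
            · exact hG.2.1 I hI J hJ hne
          · intro I hI J hJ hIJ hbet
            rcases Finset.mem_insert.1 hI with rfl | hI
            · rcases Finset.mem_insert.1 hJ with rfl | hJ
              · exfalso; rw [hchain] at hIJ; simp only at hIJ; omega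
              · exfalso
                obtain ⟨hq1, hq2, hq3, hq4⟩ := hG.1 J hJ
                have := hex J hJ
                rw [hchain] at hIJ; simp only at hIJ
                omega
            · rcases Finset.mem_insert.1 hJ with rfl | hJ
              · by_cases hIc : I = chain Δ T a b k
                · rw [hIc, hfst]
                · exfalso
                  apply hbet (chain Δ T a b k) (Finset.mem_insert_of_mem hkS)
                  constructor
                  · rcases hG.2.1 I hI _ hkS hIc with h | h
                    · exact h
                    · exact absurd (hex I hI) (by omega)
                  · rw [hfst]; omega
              · apply hG.2.2 I hI J hJ hIJ
                intro K hK
                exact hbet K (Finset.mem_insert_of_mem hK)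
        have heq := hS.2 _ (Finset.subset_insert _ _) hgood
        rw [← heq]
        exact Finset.mem_insert_self _ _
  intro I hI
  obtain ⟨k, hk, rfl⟩ := (mem_chainSet hΔ hv.ha hv.hab hv.hb).1 hI
  exact key k hk

lemma chainSet_isTemplate (hΔ : 1 ≤ Δ) (hT : Δ ≤ T) (hv : Valid Δ T a b) :
    IsTemplate Δ T (chainSet Δ T a b) := by
  refine ⟨chainSet_good hΔ hT hv, ?_⟩
  intro S' hsub hG'
  have hab0 : (a, b) ∈ chainSet Δ T a b := by
    refine (mem_chainSet hΔ hv.ha hv.hab hv.hb).2 ⟨0, ?_, rfl⟩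
    show a ≤ T
    have := hv.hab; have := hv.hb; omega
  have habS' := hsub hab0
  exact Finset.Subset.antisymm
    (subset_chainSet hΔ hT hv hG' habS' (min_start hΔ hG' habS' hv)) hsub

/-- Classification: every template is a chain family for a valid initial interval. -/
lemma template_eq_chainSet (hΔ : 1 ≤ Δ) (hT : Δ ≤ T) {S : Finset (ℕ × ℕ)}
    (hS : IsTemplate Δ T S) : ∃ a b, Valid Δ T a b ∧ S = chainSet Δ T a b := by
  have hne : S.Nonempty := by
    rcases Finset.eq_empty_or_nonempty S with rfl | h
    · exfalso
      have hv1 : Valid Δ T 1 Δ := ⟨⟨le_refl 1, hΔ, hT, Or.inl (by omega)⟩, hΔ⟩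
      have heq := hS.2 (chainSet Δ T 1 Δ) (Finset.empty_subset _) (chainSet_good hΔ hT hv1)
      have hmem : (1, Δ) ∈ chainSet Δ T 1 Δ :=
        (mem_chainSet hΔ le_rfl hΔ hT).2 ⟨0, by show (1:ℕ) ≤ T; omega, rfl⟩
      rw [heq] at hmem
      simp at hmem
    · exact h
  obtain ⟨I0, hI0, hmin⟩ := Finset.exists_min_image S (fun I => I.1) hne
  obtain ⟨a, b⟩ := I0
  simp only at hmin
  obtain ⟨hw1, hw2, hw3, hw4⟩ := hS.1.1 _ hI0
  simp only at hw1 hw2 hw3 hw4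
  have haT : a ≤ T := by omega
  have haΔ : a ≤ Δ := by
    by_contra hcon
    push_neg at hcon
    have hJ0w : IsWindow Δ T (max 1 (a - (2*Δ-1)), a - Δ) := by
      unfold IsWindow; simp only; omega
    have hgood : GoodFamily Δ T (insert (max 1 (a - (2*Δ-1)), a - Δ) S) := by
      refine ⟨?_, ?_, ?_⟩
      · intro I hI
        rcases Finset.mem_insert.1 hI with rfl | hI
        exacts [hJ0w, hS.1.1 I hI]
      · intro I hI J hJ hne
        rcases Finset.mem_insert.1 hI with rfl | hI <;>
          rcases Finset.mem_insert.1 hJ with rfl | hJ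
        · exact absurd rfl hne
        · left; have := hmin J hJ; simp only; omega
        · right; have := hmin I hI; simp only; omega
        · exact hS.1.2.1 I hI J hJ hne
      · intro I hI J hJ hIJ hbet
        rcases Finset.mem_insert.1 hI with rfl | hI
        · rcases Finset.mem_insert.1 hJ with rfl | hJ
          · exfalso; simp only at hIJ; omega
          · by_cases hJa : J = (a, b)
            · rw [hJa]; simp only; omega
            · exfalso
              apply hbet (a, b) (Finset.mem_insert_of_mem hI0)
              refine ⟨by simp only; omega, ?_⟩
              rcases hS.1.2.1 J hJ _ hI0 hJa with h | h
              · obtain ⟨hq1, hq2, hq3, hq4⟩ := hS.1.1 J hJ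
                have := hmin J hJ
                simp only at h
                omega
              · simpa using h
        · rcases Finset.mem_insert.1 hJ with rfl | hJ
          · exfalso
            obtain ⟨hq1, hq2, hq3, hq4⟩ := hS.1.1 I hI
            have := hmin I hI
            simp only at hIJ
            omega
          · apply hS.1.2.2 I hI J hJ hIJ
            intro K hK
            exact hbet K (Finset.mem_insert_of_mem hK)
    have heq := hS.2 _ (Finset.subset_insert _ _) hgood
    have hJ0S : (max 1 (a - (2*Δ-1)), a - Δ) ∈ S := heq ▸ Finset.mem_insert_self _ _
    have := hmin _ hJ0S
    simp only at this
    omega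
  have hv : Valid Δ T a b := ⟨hS.1.1 _ hI0, haΔ⟩
  exact ⟨a, b, hv, Finset.Subset.antisymm
    (subset_chainSet hΔ hT hv hS.1 hI0 hmin)
    (chainSet_subset_template hΔ hT hv hS hI0)⟩

end Maximal

section Param

variable {Δ T : ℕ}

/-- The initial interval of the `s`-th template, `s < 2Δ-1`. -/
def firstOf (Δ T s : ℕ) : ℕ × ℕ :=
  if s < Δ then (1, Δ - s) else (2*Δ - s, min T (3*Δ - s - 1))

/-- The `s`-th template. -/
def temp (Δ T s : ℕ) : Finset (ℕ × ℕ) :=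
  chainSet Δ T (firstOf Δ T s).1 (firstOf Δ T s).2

lemma firstOf_valid (hΔ : 1 ≤ Δ) (hT : Δ ≤ T) {s : ℕ} (hs : s < 2*Δ-1) :
    Valid Δ T (firstOf Δ T s).1 (firstOf Δ T s).2 := by
  unfold firstOf Valid IsWindow
  split <;> dsimp only <;> constructor <;> omega

lemma valid_eq_firstOf (hΔ : 1 ≤ Δ) (hT : Δ ≤ T) {a b : ℕ} (hv : Valid Δ T a b) :
    ∃ s < 2*Δ-1, firstOf Δ T s = (a, b) := by
  obtain ⟨⟨h1, h2, h3, h4⟩, h5⟩ := hv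
  simp only at h1 h2 h3 h4
  by_cases ha : a = 1
  · refine ⟨Δ - b, by omega, ?_⟩
    unfold firstOf
    rw [if_pos (by omega)]
    exact Prod.ext (by simp only; omega) (by simp only; omega)
  · refine ⟨2*Δ - a, by omega, ?_⟩
    unfold firstOf
    rw [if_neg (by omega)]
    exact Prod.ext (by simp only; omega) (by simp only; omega)

lemma chainSet_inj (hΔ : 1 ≤ Δ) (hT : Δ ≤ T) {a b a' b' : ℕ} (hv : Valid Δ T a b)
    (hv' : Valid Δ T a' b') (h : chainSet Δ T a b = chainSet Δ T a' b') :
    (a, b) = (a', b') := by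
  have hmem : (a', b') ∈ chainSet Δ T a b := by
    rw [h]
    refine (mem_chainSet hΔ hv'.ha hv'.hab hv'.hb).2 ⟨0, ?_, rfl⟩
    show a' ≤ T
    have := hv'.hab; have := hv'.hb; omega
  obtain ⟨k, hk, heq⟩ := (mem_chainSet hΔ hv.ha hv.hab hv.hb).1 hmem
  cases k with
  | zero => exact heq.symm
  | succ j =>
    exfalso
    rw [chain_fst_succ hv.hb j] at hk
    have hfst : a' = (chain Δ T (a) (b) (j+1)).1 := by rw [← heq]
    rw [chain_fst_succ hv.hb j] at hfst
    have h1 := hv.ha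
    have h2 := hv.hab
    have h3 := hv.hb
    have h4 := hv'.2
    generalize j*(2*Δ-1) = q at *
    omega

lemma temp_inj (hΔ : 1 ≤ Δ) (hT : Δ ≤ T) {s s' : ℕ} (hs : s < 2*Δ-1) (hs' : s' < 2*Δ-1)
    (h : temp Δ T s = temp Δ T s') : s = s' := by
  have hfe : ((firstOf Δ T s).1, (firstOf Δ T s).2) = ((firstOf Δ T s').1, (firstOf Δ T s').2) :=
    chainSet_inj hΔ hT (firstOf_valid hΔ hT hs) (firstOf_valid hΔ hT hs') h
  rw [Prod.mk.eta, Prod.mk.eta] at hfe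
  unfold firstOf at hfe
  by_cases h1 : s < Δ <;> by_cases h2 : s' < Δ <;>
    simp only [h1, h2, if_pos, if_neg, if_true, if_false, Prod.mk.injEq] at hfe <;>
    omega

end Param

section Cover

variable {Δ T : ℕ}

lemma covered_aux (hΔ : 1 ≤ Δ) (hT : Δ ≤ T) {a b : ℕ} (hv : Valid Δ T a b) {t : ℕ}
    (ht1 : 1 ≤ t) (ht2 : t ≤ T) :
    (∃ I ∈ chainSet Δ T a b, I.1 ≤ t ∧ t ≤ I.2) ↔
      ((a ≤ t ∧ t ≤ b) ∨
        ∃ k, b + k*(2*Δ-1) + Δ ≤ t ∧ t ≤ b + k*(2*Δ-1) + (2*Δ-1)) := by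
  have hab := hv.hab
  have hbT := hv.hb
  have ha := hv.ha
  constructor
  · rintro ⟨I, hI, h1, h2⟩
    obtain ⟨k, hk, rfl⟩ := (mem_chainSet hΔ ha hab hbT).1 hI
    cases k with
    | zero => exact Or.inl ⟨h1, h2⟩
    | succ j =>
      right
      have hf := chain_fst_succ (Δ := Δ) (a := a) hbT j
      have hsn := chain_snd (Δ := Δ) (a := a) hbT (j+1)
      have h3 : (j+1)*(2*Δ-1) = j*(2*Δ-1)+(2*Δ-1) := by ring
      rw [h3] at hsn
      rw [hf] at h1 hk
      rw [hsn] at h2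
      refine ⟨j, ?_, ?_⟩ <;> (generalize j*(2*Δ-1) = q at *; omega)
  · rintro (⟨h1, h2⟩ | ⟨k, h1, h2⟩)
    · exact ⟨(a, b), (mem_chainSet hΔ ha hab hbT).2 ⟨0, show a ≤ T by omega, rfl⟩, h1, h2⟩
    · have hf := chain_fst_succ (Δ := Δ) (a := a) hbT k
      have hsn := chain_snd (Δ := Δ) (a := a) hbT (k+1)
      have h3 : (k+1)*(2*Δ-1) = k*(2*Δ-1)+(2*Δ-1) := by ring
      rw [h3] at hsn
      refine ⟨chain Δ T a b (k+1), (mem_chainSet hΔ ha hab hbT).2 ⟨k+1, ?_, rfl⟩, ?_, ?_⟩ <;>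
        simp only [hf, hsn] <;> (generalize k*(2*Δ-1) = q at *; omega)

lemma mod_lt_iff {P D x : ℕ} (hD : 1 ≤ D) (hP : D ≤ P) :
    x % P < D ↔ ∃ m, m * P ≤ x ∧ x < m * P + D := by
  have hP0 : 0 < P := by omega
  constructor
  · intro h
    refine ⟨x / P, ?_, ?_⟩ <;>
      (have h0 := Nat.div_add_mod x P; rw [Nat.mul_comm]; omega)
  · rintro ⟨m, h1, h2⟩
    have e1 : x % P = x - m*P := by
      calc x % P = (x - m*P + m*P) % P := by rw [Nat.sub_add_cancel h1]
      _ = (x - m*P) % P := Nat.add_mul_mod_self_right _ m P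
      _ = x - m*P := Nat.mod_eq_of_lt (by generalize m*P = q at *; omega)
    generalize m*P = q at *
    omega

lemma covered_temp_iff (hΔ : 1 ≤ Δ) (hT : Δ ≤ T) {s t : ℕ} (hs : s < 2*Δ-1)
    (ht1 : 1 ≤ t) (ht2 : t ≤ T) :
    (∃ I ∈ temp Δ T s, I.1 ≤ t ∧ t ≤ I.2) ↔ (t + s - 1) % (2*Δ-1) < Δ := by
  rw [mod_lt_iff hΔ (by omega : Δ ≤ 2*Δ-1)]
  unfold temp
  rw [covered_aux hΔ hT (firstOf_valid hΔ hT hs) ht1 ht2]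
  unfold firstOf
  by_cases hsΔ : s < Δ
  · rw [if_pos hsΔ]
    simp only
    constructor
    · rintro (⟨h1, h2⟩ | ⟨k, h1, h2⟩)
      · exact ⟨0, by omega, by omega⟩
      · have h3 : (k+1)*(2*Δ-1) = k*(2*Δ-1)+(2*Δ-1) := by ring
        refine ⟨k+1, ?_, ?_⟩ <;> (rw [h3]; generalize k*(2*Δ-1) = q at *; omega)
    · rintro ⟨m, h1, h2⟩
      cases m with
      | zero => left; simp only [Nat.zero_mul] at h1 h2; omega
      | succ k =>
        right
        have h3 : (k+1)*(2*Δ-1) = k*(2*Δ-1)+(2*Δ-1) := by ring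
        rw [h3] at h1 h2
        refine ⟨k, ?_, ?_⟩ <;> (generalize k*(2*Δ-1) = q at *; omega)
  · rw [if_neg hsΔ]
    simp only
    constructor
    · rintro (⟨h1, h2⟩ | ⟨k, h1, h2⟩)
      · exact ⟨1, by omega, by omega⟩
      · have h3 : (k+2)*(2*Δ-1) = k*(2*Δ-1)+2*(2*Δ-1) := by ring
        refine ⟨k+2, ?_, ?_⟩ <;> (rw [h3]; generalize k*(2*Δ-1) = q at *; omega)
    · rintro ⟨m, h1, h2⟩
      match m with
      | 0 => exfalso; simp only [Nat.zero_mul] at h1 h2; omega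
      | 1 => left; simp only [Nat.one_mul] at h1 h2; constructor <;> omega
      | (k+2) =>
        right
        have h3 : (k+2)*(2*Δ-1) = k*(2*Δ-1)+2*(2*Δ-1) := by ring
        rw [h3] at h1 h2
        refine ⟨k, ?_, ?_⟩ <;> (generalize k*(2*Δ-1) = q at *; omega)

lemma count_filter_mod (P D c : ℕ) (hD : 1 ≤ D) (hP : D ≤ P) :
    ((Finset.range P).filter (fun s => (c + s) % P < D)).card = D := by
  have hP0 : 0 < P := by omega
  have key : ∀ x, (c + (x + (P - c % P))) % P = x % P := by
    intro x
    have hdm := Nat.div_add_mod c P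
    have hlt : c % P < P := Nat.mod_lt _ hP0
    have he : c + (x + (P - c % P)) = x + P + P * (c / P) := by
      generalize P * (c / P) = q at *
      omega
    rw [he, Nat.add_mul_mod_self_left, Nat.add_mod_right]
  have hcard : ((Finset.range P).filter (fun r => r < D)).card = D := by
    have : (Finset.range P).filter (fun r => r < D) = Finset.range D := by
      ext x
      simp only [Finset.mem_filter, Finset.mem_range]
      omega
    rw [this, Finset.card_range]
  refine Eq.trans ?_ hcard
  apply Finset.card_bij' (fun s _ => (c + s) % P) (fun r _ => (r + (P - c % P)) % P)
  · intro sv hsv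
    simp only [Finset.mem_filter, Finset.mem_range] at hsv ⊢
    exact ⟨Nat.mod_lt _ hP0, hsv.2⟩
  · intro r hr
    simp only [Finset.mem_filter, Finset.mem_range] at hr ⊢
    refine ⟨Nat.mod_lt _ hP0, ?_⟩
    have h1 : (c + (r + (P - c % P)) % P) % P = r % P := by
      have step : (c + (r + (P - c % P)) % P) % P = (c + (r + (P - c % P))) % P := by
        conv_lhs => rw [Nat.add_mod]
        conv_rhs => rw [Nat.add_mod]
        rw [Nat.mod_mod_of_dvd _ dvd_rfl]
      rw [step, key]
    rw [h1, Nat.mod_eq_of_lt (by omega)]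
    omega
  · intro sv hsv
    simp only [Finset.mem_filter, Finset.mem_range] at hsv
    have step : ((c + sv) % P + (P - c % P)) % P = (c + sv + (P - c % P)) % P := by
      conv_lhs => rw [Nat.add_mod]
      conv_rhs => rw [Nat.add_mod]
      rw [Nat.mod_mod_of_dvd _ dvd_rfl]
    rw [step]
    have : c + sv + (P - c % P) = c + (sv + (P - c % P)) := by omega
    rw [this, key, Nat.mod_eq_of_lt hsv.1]
  · intro r hr
    simp only [Finset.mem_filter, Finset.mem_range] at hr
    have step : (c + (r + (P - c % P)) % P) % P = (c + (r + (P - c % P))) % P := by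
      conv_lhs => rw [Nat.add_mod]
      conv_rhs => rw [Nat.add_mod]
      rw [Nat.mod_mod_of_dvd _ dvd_rfl]
    rw [step, key, Nat.mod_eq_of_lt (by omega)]

end Cover

end Stmt11

open Stmt11 in
/-- For natural numbers `1 ≤ Δ ≤ T`, every time slot `t ∈ [T]` is
covered by exactly `Δ` of the `2Δ - 1` distinct Δ-templates with respect to lifetime
`T` (a slot is covered by a template if it lies in one of its intervals). -/
theorem stmt11 (Δ T : ℕ) (hΔ : 1 ≤ Δ) (hT : Δ ≤ T) :
    {S : Finset (ℕ × ℕ) | IsTemplate Δ T S}.ncard = 2 * Δ - 1 ∧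
    ∀ t ∈ Finset.Icc 1 T,
      {S : Finset (ℕ × ℕ) | IsTemplate Δ T S ∧ ∃ I ∈ S, I.1 ≤ t ∧ t ≤ I.2}.ncard = Δ := by
  constructor
  · have hset : {S : Finset (ℕ × ℕ) | IsTemplate Δ T S} =
        ↑((Finset.range (2*Δ-1)).image (temp Δ T)) := by
      ext S
      simp only [Set.mem_setOf_eq, Finset.coe_image, Set.mem_image, Finset.mem_coe,
        Finset.mem_range]
      constructor
      · intro hS
        obtain ⟨a, b, hv, rfl⟩ := template_eq_chainSet hΔ hT hS
        obtain ⟨s, hs, hfe⟩ := valid_eq_firstOf hΔ hT hv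
        refine ⟨s, hs, ?_⟩
        unfold temp
        rw [hfe]
      · rintro ⟨s, hs, rfl⟩
        exact chainSet_isTemplate hΔ hT (firstOf_valid hΔ hT hs)
    rw [hset, Set.ncard_coe_finset, Finset.card_image_of_injOn, Finset.card_range]
    intro s hs s' hs' h
    exact temp_inj hΔ hT (Finset.mem_range.1 (Finset.mem_coe.1 hs))
      (Finset.mem_range.1 (Finset.mem_coe.1 hs')) h
  · intro t ht
    simp only [Finset.mem_Icc] at ht
    have hset : {S : Finset (ℕ × ℕ) | IsTemplate Δ T S ∧ ∃ I ∈ S, I.1 ≤ t ∧ t ≤ I.2} =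
        ↑(((Finset.range (2*Δ-1)).filter
          (fun s => (t + s - 1) % (2*Δ-1) < Δ)).image (temp Δ T)) := by
      ext S
      simp only [Set.mem_setOf_eq, Finset.coe_image, Set.mem_image, Finset.mem_coe,
        Finset.mem_filter, Finset.mem_range]
      constructor
      · rintro ⟨hS, hcov⟩
        obtain ⟨a, b, hv, rfl⟩ := template_eq_chainSet hΔ hT hS
        obtain ⟨s, hs, hfe⟩ := valid_eq_firstOf hΔ hT hv
        have htemp : temp Δ T s = chainSet Δ T a b := by
          unfold temp; rw [hfe]
        refine ⟨s, ⟨hs, ?_⟩, htemp⟩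
        apply (covered_temp_iff hΔ hT hs ht.1 ht.2).1
        rw [htemp]
        exact hcov
      · rintro ⟨s, ⟨hs, hc⟩, rfl⟩
        exact ⟨chainSet_isTemplate hΔ hT (firstOf_valid hΔ hT hs),
          (covered_temp_iff hΔ hT hs ht.1 ht.2).2 hc⟩
    rw [hset, Set.ncard_coe_finset, Finset.card_image_of_injOn]
    · have hrw : ∀ s, t + s - 1 = (t - 1) + s := fun s => by omega
      simp only [hrw]
      exact count_filter_mod (2*Δ-1) Δ (t-1) hΔ (by omega)
    · intro s hs s' hs' h
      exact temp_inj hΔ hT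
        (Finset.mem_range.1 ((Finset.mem_filter.1 (Finset.mem_coe.1 hs)).1))
        (Finset.mem_range.1 ((Finset.mem_filter.1 (Finset.mem_coe.1 hs')).1)) h
end

section
/- Let 𝒢=(G,λ) be a temporal graph of lifetime T and let Δ ≤ T. For every Δ-template 𝒮 with respect to lifetime T and every choice, for each interval W ∈ 𝒮, of a Δ-temporal matching M_W of 𝒢|_W, the union ∪_{W∈𝒮} M_W is a Δ-temporal matching of 𝒢; in particular, μ_Δ(𝒢) ≥ Σ_{W∈𝒮} μ_Δ(𝒢|_W) for every Δ-template 𝒮. -/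
variable {V : Type*}

/-! Consecutive members of a template are separated by exactly `Δ - 1` empty slots, so time
edges taken from different members are at least `Δ` apart in time and never conflict. Distinct
members are disjoint intervals, so the optimal matchings chosen on them are disjoint and their
sizes add up. -/

theorem isTimeEdge_trestrict_iff {V : Type*} {lab : Sym2 V → Finset ℕ} {W : Finset ℕ}
    {p : Sym2 V × ℕ} : IsTimeEdge (trestrict lab W) p ↔ IsTimeEdge lab p ∧ p.2 ∈ W := by
  simp only [IsTimeEdge, trestrict, Finset.mem_inter, and_assoc]

section

variable {V ι : Type*} {lab : Sym2 V → Finset ℕ} {Δ : ℕ}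

theorem disjoint_of_isTM_trestrict {W W' : Finset ℕ} (hW : Disjoint W W')
    {M M' : Finset (Sym2 V × ℕ)} (hM : IsTM (trestrict lab W) Δ M)
    (hM' : IsTM (trestrict lab W') Δ M') : Disjoint M M' :=
  Finset.disjoint_left.2 fun p hp hp' =>
    Finset.disjoint_left.1 hW (isTimeEdge_trestrict_iff.1 (hM.1 p hp)).2
      (isTimeEdge_trestrict_iff.1 (hM'.1 p hp')).2

theorem isTM_biUnion_trestrict [DecidableEq V] {s : Finset ι} {W : ι → Finset ℕ}
    (hW : ∀ i ∈ s, ∀ j ∈ s, i ≠ j → ∀ a ∈ W i, ∀ b ∈ W j, Δ ≤ ((a : ℤ) - b).natAbs)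
    {M : ι → Finset (Sym2 V × ℕ)} (hM : ∀ i ∈ s, IsTM (trestrict lab (W i)) Δ (M i)) :
    IsTM lab Δ (s.biUnion M) := by
  constructor
  · intro p hp
    obtain ⟨i, hi, hpi⟩ := Finset.mem_biUnion.1 hp
    exact (isTimeEdge_trestrict_iff.1 ((hM i hi).1 p hpi)).1
  · intro p hp q hq hpq
    obtain ⟨i, hi, hpi⟩ := Finset.mem_biUnion.1 hp
    obtain ⟨j, hj, hqj⟩ := Finset.mem_biUnion.1 hq
    by_cases hij : i = j
    · subst hij
      exact (hM i hi).2 p hpi q hqj hpq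
    · exact Or.inr <| hW i hi j hj hij p.2 (isTimeEdge_trestrict_iff.1 ((hM i hi).1 p hpi)).2
        q.2 (isTimeEdge_trestrict_iff.1 ((hM j hj).1 q hqj)).2

variable [Fintype V]

theorem bddAbove_card_isTM (lab : Sym2 V → Finset ℕ) (Δ : ℕ) :
    BddAbove {k | ∃ M : Finset (Sym2 V × ℕ), IsTM lab Δ M ∧ M.card = k} := by
  refine ⟨((Finset.univ : Finset (Sym2 V)) ×ˢ Finset.univ.biUnion lab).card, ?_⟩
  rintro k ⟨M, hM, rfl⟩
  refine Finset.card_le_card fun p hp => Finset.mem_product.2 ⟨Finset.mem_univ _, ?_⟩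
  exact Finset.mem_biUnion.2 ⟨p.1, Finset.mem_univ _, (hM.1 p hp).2⟩

theorem IsTM.card_le_tmu {M : Finset (Sym2 V × ℕ)} (hM : IsTM lab Δ M) : M.card ≤ tmu lab Δ :=
  le_csSup (bddAbove_card_isTM lab Δ) ⟨M, hM, rfl⟩

theorem exists_isTM_card_eq_tmu (lab : Sym2 V → Finset ℕ) (Δ : ℕ) :
    ∃ M : Finset (Sym2 V × ℕ), IsTM lab Δ M ∧ M.card = tmu lab Δ :=
  Nat.sSup_mem (by exact ⟨0, ∅, ⟨by simp, by simp⟩, rfl⟩) (bddAbove_card_isTM lab Δ)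

theorem sum_tmu_trestrict_le_tmu [DecidableEq V] {s : Finset ι} {W : ι → Finset ℕ}
    (hW : ∀ i ∈ s, ∀ j ∈ s, i ≠ j → ∀ a ∈ W i, ∀ b ∈ W j, Δ ≤ ((a : ℤ) - b).natAbs)
    (hdisj : ∀ i ∈ s, ∀ j ∈ s, i ≠ j → Disjoint (W i) (W j)) :
    ∑ i ∈ s, tmu (trestrict lab (W i)) Δ ≤ tmu lab Δ := by
  choose M hM hcard using fun i => exists_isTM_card_eq_tmu (trestrict lab (W i)) Δ
  calc ∑ i ∈ s, tmu (trestrict lab (W i)) Δ = (s.biUnion M).card := by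
        rw [Finset.card_biUnion fun i hi j hj hij =>
          disjoint_of_isTM_trestrict (hdisj i hi j hj hij) (hM i) (hM j)]
        exact Finset.sum_congr rfl fun i _ => (hcard i).symm
    _ ≤ tmu lab Δ := (isTM_biUnion_trestrict hW fun i _ => hM i).card_le_tmu

end

namespace GoodFamily

variable {Δ T : ℕ} {S : Finset (ℕ × ℕ)} {I J : ℕ × ℕ}

theorem snd_add_le_fst (hS : GoodFamily Δ T S) (hI : I ∈ S) (hJ : J ∈ S) (h : I.2 < J.1) :
    I.2 + Δ ≤ J.1 := by
  obtain ⟨hwin, -, hnext⟩ := hS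
  -- the first member of `S` to the right of `I` starts exactly at `I.2 + Δ`
  obtain ⟨K, hK, hKmin⟩ := Finset.exists_min_image (S.filter fun K => I.2 < K.1) Prod.fst
    ⟨J, Finset.mem_filter.2 ⟨hJ, h⟩⟩
  rw [Finset.mem_filter] at hK
  have hK_start : K.1 = I.2 + Δ := by
    refine hnext I hI K hK.1 hK.2 fun K' hK' ⟨h₁, h₂⟩ => ?_
    have := hKmin K' (Finset.mem_filter.2 ⟨hK', h₁⟩)
    have := (hwin K' hK').2.1
    omega
  have := hKmin J (Finset.mem_filter.2 ⟨hJ, h⟩)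
  omega

theorem le_natAbs_sub (hS : GoodFamily Δ T S) (hI : I ∈ S) (hJ : J ∈ S) (hIJ : I ≠ J) :
    ∀ a ∈ Finset.Icc I.1 I.2, ∀ b ∈ Finset.Icc J.1 J.2, Δ ≤ ((a : ℤ) - b).natAbs := by
  intro a ha b hb
  rw [Finset.mem_Icc] at ha hb
  rcases hS.2.1 I hI J hJ hIJ with h | h
  · have := hS.snd_add_le_fst hI hJ h; omega
  · have := hS.snd_add_le_fst hJ hI h; omega

theorem disjoint_Icc (hS : GoodFamily Δ T S) (hI : I ∈ S) (hJ : J ∈ S) (hIJ : I ≠ J) :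
    Disjoint (Finset.Icc I.1 I.2) (Finset.Icc J.1 J.2) := by
  rw [Finset.disjoint_left]
  intro a ha hb
  rw [Finset.mem_Icc] at ha hb
  rcases hS.2.1 I hI J hJ hIJ with h | h <;> omega

end GoodFamily

theorem stmt12_general {V : Type*} [Fintype V] [DecidableEq V]
    (lab : Sym2 V → Finset ℕ) (T Δ : ℕ)
    (S : Finset (ℕ × ℕ)) (hS : IsTemplate Δ T S)
    (MW : ℕ × ℕ → Finset (Sym2 V × ℕ))
    (hMW : ∀ I ∈ S, IsTM (trestrict lab (Finset.Icc I.1 I.2)) Δ (MW I)) :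
    IsTM lab Δ (S.biUnion MW) ∧
    ∑ I ∈ S, tmu (trestrict lab (Finset.Icc I.1 I.2)) Δ ≤ tmu lab Δ := by
  have hsep := fun I (hI : I ∈ S) J (hJ : J ∈ S) (hIJ : I ≠ J) => hS.1.le_natAbs_sub hI hJ hIJ
  exact ⟨isTM_biUnion_trestrict hsep hMW,
    sum_tmu_trestrict_le_tmu hsep fun _ hI _ hJ hIJ => hS.1.disjoint_Icc hI hJ hIJ⟩

/-- For a temporal graph of lifetime `T`, `Δ ≤ T`, a Δ-template `S`, and
any choice of a Δ-temporal matching `MW I` of `𝒢|_I` for each interval `I ∈ S`, the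
union `⋃_{I ∈ S} MW I` is a Δ-temporal matching of 𝒢; in particular
`μ_Δ(𝒢) ≥ ∑_{I ∈ S} μ_Δ(𝒢|_I)`. -/
theorem stmt12 {V : Type*} [Fintype V] [DecidableEq V]
    (lab : Sym2 V → Finset ℕ) (T Δ : ℕ) (hT : HasLifetime lab T) (hΔT : Δ ≤ T)
    (S : Finset (ℕ × ℕ)) (hS : IsTemplate Δ T S)
    (MW : ℕ × ℕ → Finset (Sym2 V × ℕ))
    (hMW : ∀ I ∈ S, IsTM (trestrict lab (Finset.Icc I.1 I.2)) Δ (MW I)) :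
    IsTM lab Δ (S.biUnion MW) ∧
    ∑ I ∈ S, tmu (trestrict lab (Finset.Icc I.1 I.2)) Δ ≤ tmu lab Δ :=
  stmt12_general lab T Δ S hS MW hMW
end
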